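/- arXiv:2209.05681 — 11 statements merged into one kernel-verified Lean document; each statement's English description precedes it below -/
import Mathlib

section
/- Let A be an abelian group and let H be a Jordan group. Then the direct product A × H is a Jordan group and its Jordan constant satisfies J_{A × H} = J_H. -/
/-- A group `G` is a *Jordan group* if there is a positive integer `d` such that every
finite subgroup `H` of `G` contains a normal abelian subgroup of index at most `d` in `H`. -/
def IsJordanGroup (G : Type*) [Group G] : Prop :=
  ∃ d : ℕ, 0 < d ∧ ∀ H : Subgroup G, Finite H →
    ∃ A : Subgroup H, A.Normal ∧ IsMulCommutative A ∧ A.index ≤ d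

/-- The *Jordan constant* of a group `G`: the least positive integer `d` such that every
finite subgroup `H` of `G` contains a normal abelian subgroup of index at most `d` in `H`. -/
noncomputable def jordanConstant (G : Type*) [Group G] : ℕ :=
  sInf {d : ℕ | 0 < d ∧ ∀ H : Subgroup G, Finite H →
    ∃ A : Subgroup H, A.Normal ∧ IsMulCommutative A ∧ A.index ≤ d}


lemma jordan_forward {A H : Type*} [CommGroup A] [Group H] {d : ℕ}
    (hd : ∀ K : Subgroup H, Finite K →
      ∃ B : Subgroup K, B.Normal ∧ IsMulCommutative B ∧ B.index ≤ d) :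
    ∀ K : Subgroup (A × H), Finite K →
      ∃ B : Subgroup K, B.Normal ∧ IsMulCommutative B ∧ B.index ≤ d := by
  intro K hK
  set f : K →* H := (MonoidHom.snd A H).comp K.subtype with hf
  haveI : Finite f.range := Finite.of_surjective f.rangeRestrict f.rangeRestrict_surjective
  obtain ⟨B, hBn, hBc, hBi⟩ := hd f.range inferInstance
  refine ⟨B.comap f.rangeRestrict, hBn.comap _, ?_, ?_⟩
  · haveI := hBc
    constructor
    constructor
    rintro ⟨a, ha⟩ ⟨b, hb⟩
    apply Subtype.ext; apply Subtype.ext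
    have h2 : (f.rangeRestrict ↑a : H) * (f.rangeRestrict ↑b : H)
        = (f.rangeRestrict ↑b : H) * (f.rangeRestrict ↑a : H) := by
      exact_mod_cast congrArg (fun x : f.range => (x : H))
        (B.mul_comm_of_mem_isMulCommutative ha hb)
    simp only [MonoidHom.coe_rangeRestrict] at h2
    ext
    · exact mul_comm _ _
    · exact h2
  · rw [B.index_comap_of_surjective f.rangeRestrict_surjective]
    exact hBi

lemma jordan_backward {A H : Type*} [CommGroup A] [Group H] {d : ℕ}
    (hd : ∀ K : Subgroup (A × H), Finite K →
      ∃ B : Subgroup K, B.Normal ∧ IsMulCommutative B ∧ B.index ≤ d) :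
    ∀ K : Subgroup H, Finite K →
      ∃ B : Subgroup K, B.Normal ∧ IsMulCommutative B ∧ B.index ≤ d := by
  intro K hK
  have hg : Function.Injective (MonoidHom.inr A H) := fun a b h => by
    simpa using congrArg Prod.snd h
  set e := K.equivMapOfInjective (MonoidHom.inr A H) hg with he
  haveI : Finite (K.map (MonoidHom.inr A H)) := Finite.of_surjective e e.surjective
  obtain ⟨B, hBn, hBc, hBi⟩ := hd (K.map (MonoidHom.inr A H)) inferInstance
  refine ⟨B.comap e.toMonoidHom, hBn.comap _, ?_, ?_⟩
  · haveI := hBc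
    constructor
    constructor
    rintro ⟨a, ha⟩ ⟨b, hb⟩
    apply Subtype.ext
    apply e.injective
    show e (a * b) = e (b * a)
    rw [map_mul, map_mul]
    exact B.mul_comm_of_mem_isMulCommutative ha hb
  · rw [B.index_comap_of_surjective e.surjective]
    exact hBi

/-- If `A` is an abelian group and `H` is a Jordan group, then `A × H` is a Jordan group
and `J_{A × H} = J_H`. -/
theorem stmt_0 (A H : Type*) [CommGroup A] [Group H] (hH : IsJordanGroup H) :
    IsJordanGroup (A × H) ∧ jordanConstant (A × H) = jordanConstant H := by
  obtain ⟨d, hd0, hd⟩ := hH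
  constructor
  · exact ⟨d, hd0, jordan_forward hd⟩
  · unfold jordanConstant
    congr 1
    ext n
    exact ⟨fun ⟨h0, h⟩ => ⟨h0, jordan_backward h⟩, fun ⟨h0, h⟩ => ⟨h0, jordan_forward h⟩⟩
end

section
/- Let m ≥ 3 be an integer and let φ be a nontrivial group homomorphism from the cyclic group C₂ of order 2 to the automorphism group of the cyclic group C_m of order m. Then the semidirect product C_m ⋊_φ C₂ has Jordan constant equal to 2. -/
/-- For `m ≥ 3` and a nontrivial action `φ` of the cyclic group of order `2` on the cyclic
group of order `m`, the semidirect product `C_m ⋊[φ] C₂` has Jordan constant `2`. -/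
theorem stmt_2 (m : ℕ) (hm : 3 ≤ m)
    (φ : Multiplicative (ZMod 2) →* MulAut (Multiplicative (ZMod m)))
    (hφ : φ ≠ 1) :
    jordanConstant (Multiplicative (ZMod m) ⋊[φ] Multiplicative (ZMod 2)) = 2 := by
  have h2 : (2:ℕ) ∈ {d : ℕ | 0 < d ∧ ∀ H : Subgroup (Multiplicative (ZMod m) ⋊[φ] Multiplicative (ZMod 2)), Finite H →
      ∃ A : Subgroup H, A.Normal ∧ IsMulCommutative A ∧ A.index ≤ d} := by
    refine ⟨by norm_num, fun H hH => ?_⟩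
    set f : H →* Multiplicative (ZMod 2) :=
      SemidirectProduct.rightHom.comp H.subtype with hf
    refine ⟨f.ker, MonoidHom.normal_ker f, ?_, ?_⟩
    · constructor
      constructor
      rintro ⟨⟨a, ha⟩, haker⟩ ⟨⟨b, hb⟩, hbker⟩
      have ha' : a.right = 1 := haker
      have hb' : b.right = 1 := hbker
      have key : a * b = b * a := by
        ext
        · simp [SemidirectProduct.mul_left, ha', hb', mul_comm]
        · simp [SemidirectProduct.mul_right, ha', hb']
      exact Subtype.ext (Subtype.ext key)
    · rw [Subgroup.index_ker f]
      calc Nat.card f.range ≤ Nat.card (Multiplicative (ZMod 2)) :=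
            Nat.card_le_card_of_injective _ Subtype.val_injective
        _ = 2 := by simp [Nat.card_eq_fintype_card]
  have hnc : ∃ x y : (Multiplicative (ZMod m) ⋊[φ] Multiplicative (ZMod 2)), x * y ≠ y * x := by
    have : ∃ g : Multiplicative (ZMod 2), φ g ≠ 1 := by
      by_contra h
      push_neg at h
      exact hφ (MonoidHom.ext fun g => h g)
    obtain ⟨g, hg⟩ := this
    have : ∃ a : Multiplicative (ZMod m), φ g a ≠ a := by
      by_contra h
      push_neg at h
      exact hg (MulEquiv.ext fun a => h a)
    obtain ⟨a, haa⟩ := this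
    refine ⟨SemidirectProduct.inr g, SemidirectProduct.inl a, fun h => ?_⟩
    have := congrArg SemidirectProduct.left h
    simp [SemidirectProduct.mul_left] at this
    exact haa this
  have hle : jordanConstant (Multiplicative (ZMod m) ⋊[φ] Multiplicative (ZMod 2)) ≤ 2 := Nat.sInf_le h2
  have hge : 2 ≤ jordanConstant (Multiplicative (ZMod m) ⋊[φ] Multiplicative (ZMod 2)) := by
    refine le_csInf ⟨2, h2⟩ ?_
    rintro d ⟨hd0, hd⟩
    by_contra hlt
    push_neg at hlt
    interval_cases d
    · have : Finite (Multiplicative (ZMod m) ⋊[φ] Multiplicative (ZMod 2)) := by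
        have : Finite (Multiplicative (ZMod m)) := by
          have : NeZero m := ⟨by omega⟩
          infer_instance
        exact Finite.of_injective
          (fun g : (Multiplicative (ZMod m) ⋊[φ] Multiplicative (ZMod 2)) => (g.left, g.right))
          (fun x y h => SemidirectProduct.ext (congrArg Prod.fst h) (congrArg Prod.snd h))
      obtain ⟨A, hAn, hAc, hAi⟩ := hd ⊤ inferInstance
      have hA0 : A.index ≠ 0 := A.index_ne_zero_of_finite
      have hA1 : A.index = 1 := by omega
      rw [Subgroup.index_eq_one] at hA1
      subst hA1
      obtain ⟨x, y, hxy⟩ := hnc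
      have hc := hAc.1.1 ⟨⟨x, trivial⟩, trivial⟩ ⟨⟨y, trivial⟩, trivial⟩
      apply hxy
      exact congrArg (fun z : (⊤ : Subgroup (⊤ : Subgroup (Multiplicative (ZMod m) ⋊[φ] Multiplicative (ZMod 2)))) => ((z : (⊤ : Subgroup (Multiplicative (ZMod m) ⋊[φ] Multiplicative (ZMod 2)))) : (Multiplicative (ZMod m) ⋊[φ] Multiplicative (ZMod 2)))) hc
  omega
end

section
/- For every integer n ≥ 2, the direct product Dic₄ₙ × Dic₄ₙ of two copies of the dicyclic group of order 4n has Jordan constant equal to 4. -/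
open QuaternionGroup

/-- The sign homomorphism of the dicyclic group. -/
def dicSign (n : ℕ) : QuaternionGroup n →* Multiplicative (ZMod 2) where
  toFun x := Multiplicative.ofAdd (match x with | .a _ => 0 | .xa _ => 1)
  map_one' := rfl
  map_mul' := by rintro (i | i) (j | j) <;> simp only [a_mul_a, a_mul_xa, xa_mul_a, xa_mul_xa] <;> rfl

lemma mem_ker_dicSign {n : ℕ} {x : QuaternionGroup n} :
    x ∈ (dicSign n).ker ↔ ∃ i, x = a i := by
  cases x with
  | a i => exact ⟨fun _ => ⟨i, rfl⟩, fun _ => rfl⟩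
  | xa i =>
    refine ⟨fun h => (show ¬ (Multiplicative.ofAdd (1 : ZMod 2) = 1) by decide) h |>.elim, ?_⟩
    rintro ⟨_, h⟩
    cases h

lemma dicSign_surjective {n : ℕ} : Function.Surjective (dicSign n) := by
  intro m
  have h : ∀ m' : Multiplicative (ZMod 2), m' = Multiplicative.ofAdd 0 ∨ m' = Multiplicative.ofAdd 1 := by decide
  have h := h m
  rcases h with h | h
  · exact ⟨a 0, h.symm⟩
  · exact ⟨xa 0, h.symm⟩

lemma index_ker_dicSign {n : ℕ} : (dicSign n).ker.index = 2 := by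
  rw [Subgroup.index_ker, MonoidHom.range_eq_top_of_surjective _ dicSign_surjective,
    Subgroup.card_top, Nat.card_eq_fintype_card, Fintype.card_multiplicative, ZMod.card]

instance ker_dicSign_isComm {n : ℕ} : IsMulCommutative (dicSign n).ker := by
  constructor
  constructor
  rintro ⟨x, hx⟩ ⟨y, hy⟩
  obtain ⟨i, rfl⟩ := mem_ker_dicSign.mp hx
  obtain ⟨j, rfl⟩ := mem_ker_dicSign.mp hy
  ext
  simp [add_comm]

lemma card_ker_dicSign {n : ℕ} [NeZero n] : Nat.card (dicSign n).ker = 2 * n := by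
  have h := (dicSign n).ker.card_mul_index
  rw [index_ker_dicSign] at h
  simp only [Nat.card_eq_fintype_card, QuaternionGroup.card] at h ⊢
  omega

lemma two_torsion {n : ℕ} [NeZero n] {i : ZMod (2 * n)} (h : i + i = 0) :
    i = 0 ∨ i = (n : ZMod (2 * n)) := by
  have hpos : 0 < n := NeZero.pos n
  have hv : i.val < 2 * n := ZMod.val_lt i
  have h' : ((i.val + i.val : ℕ) : ZMod (2 * n)) = 0 := by
    push_cast [ZMod.natCast_zmod_val]; exact h
  rw [ZMod.natCast_eq_zero_iff] at h'
  obtain ⟨c, hc⟩ := h'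
  have hc1 : c ≤ 1 := by nlinarith
  have hval : i.val = 0 ∨ i.val = n := by interval_cases c <;> omega
  rcases hval with h0 | h0
  · left; rw [← ZMod.natCast_zmod_val i, h0]; simp
  · right; rw [← ZMod.natCast_zmod_val i, h0]

lemma ncard_four_le {α : Type*} (w x y z : α) : ({w, x, y, z} : Set α).ncard ≤ 4 := by
  apply le_trans (Set.ncard_insert_le _ _)
  have h3 := Set.ncard_insert_le x ({y, z} : Set α)
  have h2 := Set.ncard_insert_le y ({z} : Set α)
  have h1 : ({z} : Set α).ncard = 1 := Set.ncard_singleton z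
  omega

lemma card_abelian_le {n : ℕ} (hn : 2 ≤ n) (B : Subgroup (QuaternionGroup n))
    (hB : IsMulCommutative B) : Nat.card B ≤ 2 * n := by
  haveI : NeZero n := ⟨by omega⟩
  by_cases h : ∀ x ∈ B, x ∈ (dicSign n).ker
  · calc Nat.card B ≤ Nat.card (dicSign n).ker := Subgroup.card_le_of_le h
      _ = 2 * n := card_ker_dicSign
  · push_neg at h
    obtain ⟨x, hxB, hxk⟩ := h
    obtain ⟨j, rfl⟩ : ∃ j, x = xa j := by
      cases x with
      | a i => exact absurd (mem_ker_dicSign.mpr ⟨i, rfl⟩) hxk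
      | xa i => exact ⟨i, rfl⟩
    have hsub : (B : Set (QuaternionGroup n)) ⊆
        {a 0, a (n : ZMod (2 * n)), xa j, xa ((n : ZMod (2 * n)) + j)} := by
      intro y hy
      have hcomm : y * xa j = xa j * y :=
        congrArg Subtype.val (hB.is_comm.comm ⟨y, hy⟩ ⟨xa j, hxB⟩)
      cases y with
      | a i =>
        rw [a_mul_xa, xa_mul_a] at hcomm
        simp only [xa.injEq] at hcomm
        have hii : i + i = 0 := by linear_combination -hcomm
        rcases two_torsion hii with rfl | rfl
        · left; rfl
        · right; left; rfl
      | xa i =>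
        rw [xa_mul_xa, xa_mul_xa] at hcomm
        simp only [a.injEq] at hcomm
        have hii : (i - j) + (i - j) = 0 := by linear_combination -hcomm
        rcases two_torsion hii with h0 | h0
        · right; right; left
          rw [sub_eq_zero] at h0
          rw [h0]
        · right; right; right
          rw [sub_eq_iff_eq_add] at h0
          rw [h0]
          simp [add_comm]
    calc Nat.card B = (B : Set (QuaternionGroup n)).ncard := (Nat.card_coe_set_eq _).symm
      _ ≤ ({a 0, a (n : ZMod (2 * n)), xa j, xa ((n : ZMod (2 * n)) + j)} :
            Set (QuaternionGroup n)).ncard := Set.ncard_le_ncard hsub (Set.toFinite _)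
      _ ≤ 4 := ncard_four_le _ _ _ _
      _ ≤ 2 * n := by omega

lemma prod_isComm {G₁ G₂ : Type*} [Group G₁] [Group G₂] (H : Subgroup G₁) (K : Subgroup G₂)
    [IsMulCommutative H] [IsMulCommutative K] : IsMulCommutative (H.prod K) := by
  constructor
  constructor
  rintro ⟨⟨x1, x2⟩, hx⟩ ⟨⟨y1, y2⟩, hy⟩
  rw [Subgroup.mem_prod] at hx hy
  ext
  · exact Subgroup.mul_comm_of_mem_isMulCommutative H hx.1 hy.1
  · exact Subgroup.mul_comm_of_mem_isMulCommutative K hx.2 hy.2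

/-- For `n ≥ 2`, the direct product `Dic₄ₙ × Dic₄ₙ` has Jordan constant `4`. -/
theorem stmt_4 (n : ℕ) (hn : 2 ≤ n) :
    jordanConstant (QuaternionGroup n × QuaternionGroup n) = 4 := by
  haveI : NeZero n := ⟨by omega⟩
  have h4 : 4 ∈ {d : ℕ | 0 < d ∧
      ∀ H : Subgroup (QuaternionGroup n × QuaternionGroup n), Finite H →
      ∃ A : Subgroup H, A.Normal ∧ IsMulCommutative A ∧ A.index ≤ d} := by
    refine ⟨by norm_num, fun H _ => ?_⟩
    set ψ := (dicSign n).prodMap (dicSign n) with hψ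
    haveI : IsMulCommutative ψ.ker := by
      rw [hψ, MonoidHom.ker_prodMap]
      exact prod_isComm _ _
    refine ⟨ψ.ker.subgroupOf H, inferInstance, inferInstance, ?_⟩
    have hdvd : (ψ.ker.subgroupOf H).index ∣ ψ.ker.index :=
      Subgroup.relIndex_dvd_index_of_normal ψ.ker H
    have hidx : ψ.ker.index = 4 := by
      rw [hψ, MonoidHom.ker_prodMap, Subgroup.index_prod, index_ker_dicSign]
    rw [hidx] at hdvd
    exact Nat.le_of_dvd (by norm_num) hdvd
  have hlb : ∀ d ∈ {d : ℕ | 0 < d ∧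
      ∀ H : Subgroup (QuaternionGroup n × QuaternionGroup n), Finite H →
      ∃ A : Subgroup H, A.Normal ∧ IsMulCommutative A ∧ A.index ≤ d}, 4 ≤ d := by
    rintro d ⟨-, hd⟩
    obtain ⟨A, -, hC, hidx⟩ := hd ⊤ inferInstance
    haveI := hC
    set B := A.map (⊤ : Subgroup (QuaternionGroup n × QuaternionGroup n)).subtype with hB
    have hBidx : B.index = A.index :=
      Subgroup.index_map_eq A (fun g => ⟨⟨g, trivial⟩, rfl⟩)
        (by rw [Subgroup.ker_subtype]; exact bot_le)
    set B1 := B.map (MonoidHom.fst (QuaternionGroup n) (QuaternionGroup n)) with hB1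
    set B2 := B.map (MonoidHom.snd (QuaternionGroup n) (QuaternionGroup n)) with hB2
    have hc1 : Nat.card B1 ≤ 2 * n := card_abelian_le hn _ inferInstance
    have hc2 : Nat.card B2 ≤ 2 * n := card_abelian_le hn _ inferInstance
    have hle : B ≤ B1.prod B2 := by
      rintro ⟨x, y⟩ hxy
      exact ⟨Subgroup.mem_map_of_mem _ hxy, Subgroup.mem_map_of_mem _ hxy⟩
    have hcardB : Nat.card B ≤ 2 * n * (2 * n) := by
      calc Nat.card B ≤ Nat.card (B1.prod B2) := Subgroup.card_le_of_le hle
        _ = Nat.card B1 * Nat.card B2 := by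
            rw [Nat.card_congr (Subgroup.prodEquiv B1 B2).toEquiv, Nat.card_prod]
        _ ≤ 2 * n * (2 * n) := Nat.mul_le_mul hc1 hc2
    have hmul : Nat.card B * B.index = 4 * n * (4 * n) := by
      rw [Subgroup.card_mul_index, Nat.card_prod]
      simp only [Nat.card_eq_fintype_card, QuaternionGroup.card]
    have hkey : (2 * n * (2 * n)) * 4 ≤ (2 * n * (2 * n)) * B.index := by
      calc (2 * n * (2 * n)) * 4 = 4 * n * (4 * n) := by ring
        _ = Nat.card B * B.index := hmul.symm
        _ ≤ (2 * n * (2 * n)) * B.index := Nat.mul_le_mul_right _ hcardB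
    have h4B : 4 ≤ B.index := Nat.le_of_mul_le_mul_left hkey (by positivity)
    rw [hBidx] at h4B
    omega
  have hmem := Nat.sInf_mem ⟨4, h4⟩
  exact le_antisymm (Nat.sInf_le h4) (hlb _ hmem)
end

section
/- The special linear group SL(2, F₃) over the field with three elements (isomorphic to the binary tetrahedral group) has Jordan constant equal to 12; equivalently, its maximal abelian normal subgroup is its center, which has order 2. -/
set_option maxHeartbeats 1000000
set_option synthInstance.maxHeartbeats 200000


private abbrev G3 := Matrix.SpecialLinearGroup (Fin 2) (ZMod 3)

private instance : DecidableEq G3 := fun a b => decidable_of_iff (a.1 = b.1) Subtype.ext_iff.symm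

private instance : DecidablePred (· ∈ Subgroup.center G3) :=
  fun a => decidable_of_iff (∀ g : G3, g * a = a * g) (Subgroup.mem_center_iff).symm

private lemma key_comm : ∀ a : G3, (∀ h : G3, a * (h * a * h⁻¹) = (h * a * h⁻¹) * a) →
    ∀ g : G3, g * a = a * g := by decide

private lemma cardG3 : Nat.card G3 = 24 := by
  rw [Nat.card_eq_fintype_card]; decide

private lemma cardZ3 : Nat.card (Subgroup.center G3) = 2 := by
  rw [Nat.card_eq_fintype_card]; decide

private lemma le_center3 (A : Subgroup G3) (hN : A.Normal) (hC : IsMulCommutative A) :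
    A ≤ Subgroup.center G3 := by
  haveI := hC
  intro a ha
  rw [Subgroup.mem_center_iff]
  refine key_comm a (fun h => ?_)
  exact A.mul_comm_of_mem_isMulCommutative ha (hN.conj_mem a ha h)

private lemma bot_comm {G : Type*} [Group G] : IsMulCommutative (⊥ : Subgroup G) :=
  ⟨⟨fun a b => by
    have ha := a.2; have hb := b.2
    simp only [Subgroup.mem_bot] at ha hb
    ext; simp [ha, hb]⟩⟩

private lemma indexZ3 : (Subgroup.center G3).index = 12 := by
  have h := Subgroup.index_mul_card (Subgroup.center G3)
  rw [cardZ3, cardG3] at h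
  omega

private lemma mem12 : (12 : ℕ) ∈ {d : ℕ | 0 < d ∧ ∀ H : Subgroup G3, Finite H →
    ∃ A : Subgroup H, A.Normal ∧ IsMulCommutative A ∧ A.index ≤ d} := by
  refine ⟨by norm_num, fun H _ => ?_⟩
  by_cases hH : H = ⊤
  · subst hH
    refine ⟨(Subgroup.center G3).subgroupOf ⊤, ?_, inferInstance, ?_⟩
    · constructor
      intro n hn g
      rw [Subgroup.mem_subgroupOf] at hn ⊢
      have := (Subgroup.center G3).normal_of_characteristic.conj_mem _ hn (g : G3)
      exact this
    · have : ((Subgroup.center G3).subgroupOf ⊤).index = (Subgroup.center G3).relIndex ⊤ := rfl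
      rw [this, Subgroup.relIndex_top_right, indexZ3]
  · refine ⟨⊥, inferInstance, bot_comm, ?_⟩
    rw [Subgroup.index_bot]
    have hd : Nat.card H ∣ 24 := cardG3 ▸ H.card_subgroup_dvd_card
    have hpos : 0 < Nat.card H := Nat.card_pos
    have hne : Nat.card H ≠ 24 := fun h =>
      hH (Subgroup.eq_top_of_card_eq H (by rw [h, cardG3]))
    obtain ⟨k, hk⟩ := hd
    rcases Nat.lt_or_ge k 2 with hk2 | hk2
    · interval_cases k <;> omega
    · have h2 : Nat.card H * 2 ≤ 24 := hk ▸ Nat.mul_le_mul_left _ hk2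
      omega

/-- `SL(2, F₃)` has Jordan constant `12`; equivalently, every abelian normal subgroup of
`SL(2, F₃)` is contained in its center, which has order `2`. -/
theorem stmt_5 :
    jordanConstant (Matrix.SpecialLinearGroup (Fin 2) (ZMod 3)) = 12 ∧
    (∀ A : Subgroup (Matrix.SpecialLinearGroup (Fin 2) (ZMod 3)), A.Normal → IsMulCommutative A →
      A ≤ Subgroup.center (Matrix.SpecialLinearGroup (Fin 2) (ZMod 3))) ∧
    Nat.card (Subgroup.center (Matrix.SpecialLinearGroup (Fin 2) (ZMod 3))) = 2 := by
  refine ⟨?_, fun A hN hC => le_center3 A hN hC, cardZ3⟩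
  have hge : ∀ d ∈ {d : ℕ | 0 < d ∧ ∀ H : Subgroup G3, Finite H →
      ∃ A : Subgroup H, A.Normal ∧ IsMulCommutative A ∧ A.index ≤ d}, 12 ≤ d := by
    rintro d ⟨hd0, hall⟩
    obtain ⟨A, hN, hC, hidx⟩ := hall ⊤ inferInstance
    haveI := hC
    set f := (Subgroup.topEquiv (G := G3)).toMonoidHom with hf
    have hBN : (A.map f).Normal := hN.map f Subgroup.topEquiv.surjective
    have hBle : A.map f ≤ Subgroup.center G3 := le_center3 _ hBN inferInstance
    have hcardB : Nat.card (A.map f) ≤ 2 := by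
      have := Subgroup.card_le_of_le hBle
      rwa [cardZ3] at this
    have hcardA : Nat.card A = Nat.card (A.map f) :=
      Nat.card_congr (A.equivMapOfInjective f Subgroup.topEquiv.injective).toEquiv
    have hmul : A.index * Nat.card A = 24 := by
      rw [Subgroup.index_mul_card, Subgroup.card_top, cardG3]
    have hposA : 0 < Nat.card A := Nat.card_pos
    have h2 : Nat.card A ≤ 2 := hcardA ▸ hcardB
    interval_cases h : Nat.card A <;> omega
  exact le_antisymm (Nat.sInf_le mem12) (le_csInf ⟨12, mem12⟩ hge)
end

section
/- The direct product SL(2, F₃) × SL(2, F₃) of two copies of the special linear group over the field with three elements (i.e., of two copies of the binary tetrahedral group) has Jordan constant equal to 144. -/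
set_option maxHeartbeats 1000000
set_option synthInstance.maxHeartbeats 200000
set_option maxRecDepth 10000

noncomputable abbrev SL23 := Matrix.SpecialLinearGroup (Fin 2) (ZMod 3)

instance : DecidableEq SL23 := fun a b =>
  decidable_of_iff (a.1 = b.1) (Subtype.ext_iff).symm

instance : DecidablePred (· ∈ Subgroup.center SL23) := fun _ =>
  decidable_of_iff (∀ y : SL23, y * _ = _ * y) (Subgroup.mem_center_iff).symm

/-- Every non-central element of `SL(2,3)` has two conjugates that do not commute
(so no normal abelian subgroup contains a non-central element). -/
private theorem key : ∀ x : SL23, (∀ y : SL23, y * x = x * y) ∨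
    ∃ a b : SL23, (a*x*a⁻¹)*(b*x*b⁻¹) ≠ (b*x*b⁻¹)*(a*x*a⁻¹) := by decide

private abbrev GG := SL23 × SL23

private abbrev Z : Subgroup GG := (Subgroup.center SL23).prod (Subgroup.center SL23)

instance : DecidablePred (· ∈ Z) := fun x =>
  decidable_of_iff (x.1 ∈ Subgroup.center SL23 ∧ x.2 ∈ Subgroup.center SL23)
    (Subgroup.mem_prod).symm

private theorem cardSL : Nat.card SL23 = 24 := by
  rw [Nat.card_eq_fintype_card]; decide

private theorem cardCenter : Nat.card (Subgroup.center SL23) = 2 := by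
  rw [Nat.card_eq_fintype_card]; decide

private theorem cardGG : Nat.card GG = 576 := by
  rw [Nat.card_prod, cardSL]

private theorem cardZ : Nat.card Z = 4 := by
  rw [Nat.card_congr ((Subgroup.center SL23).prodEquiv (Subgroup.center SL23)).toEquiv,
    Nat.card_prod, cardCenter]

private theorem Znormal : Z.Normal := inferInstance

private theorem Zcomm : IsMulCommutative Z := by
  constructor; constructor
  rintro ⟨⟨a1, a2⟩, ha⟩ ⟨⟨b1, b2⟩, hb⟩
  rw [Subgroup.mem_prod] at ha hb
  apply Subtype.ext
  apply Prod.ext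
  · exact (Subgroup.mem_center_iff.mp hb.1 a1)
  · exact (Subgroup.mem_center_iff.mp hb.2 a2)

private theorem indexZ : Z.index = 144 := by
  have h := Subgroup.card_mul_index (H := Z)
  rw [cardZ, cardGG] at h
  omega

/-- Upper bound: for any finite subgroup `H`, the intersection with the center `Z` of the
ambient group is a normal abelian subgroup of relative index dividing `[G : Z] = 144`. -/
private theorem upper : ∀ H : Subgroup GG, Finite H →
    ∃ A : Subgroup H, A.Normal ∧ IsMulCommutative A ∧ A.index ≤ 144 := by
  intro H _
  haveI := Zcomm
  refine ⟨Z.subgroupOf H, Znormal.subgroupOf H, inferInstance, ?_⟩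
  have hdvd : (Z.subgroupOf H).index ∣ Z.index :=
    Subgroup.relIndex_dvd_index_of_normal (H := Z) (K := H)
  rw [indexZ] at hdvd
  exact Nat.le_of_dvd (by norm_num) hdvd

/-- Lower bound: every normal abelian subgroup of the full group lies in the center `Z`
(of order 4), hence has index at least `576 / 4 = 144`. -/
private theorem lower : ∀ d : ℕ, (0 < d ∧ ∀ H : Subgroup GG, Finite H →
    ∃ A : Subgroup H, A.Normal ∧ IsMulCommutative A ∧ A.index ≤ d) → 144 ≤ d := by
  rintro d ⟨-, hd⟩
  obtain ⟨A, hAn, hAc, hAi⟩ := hd ⊤ inferInstance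
  -- every element of A is in Z
  have hsub : ∀ x : (⊤ : Subgroup GG), x ∈ A → (x : GG) ∈ Z := by
    intro x hx
    rw [Subgroup.mem_prod]
    constructor
    · rcases key (x : GG).1 with hc | ⟨a, b, hab⟩
      · exact Subgroup.mem_center_iff.mpr hc
      · exfalso
        set ga : (⊤ : Subgroup GG) := ⟨(a, 1), Subgroup.mem_top _⟩
        set gb : (⊤ : Subgroup GG) := ⟨(b, 1), Subgroup.mem_top _⟩
        have h1 : ga * x * ga⁻¹ ∈ A := hAn.conj_mem x hx ga
        have h2 : gb * x * gb⁻¹ ∈ A := hAn.conj_mem x hx gb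
        haveI := hAc
        have h3 := Subgroup.mul_comm_of_mem_isMulCommutative (H := A) h1 h2
        apply hab
        have h4 := congrArg (fun z : (⊤ : Subgroup GG) => (z : GG).1) h3
        simpa using h4
    · rcases key (x : GG).2 with hc | ⟨a, b, hab⟩
      · exact Subgroup.mem_center_iff.mpr hc
      · exfalso
        set ga : (⊤ : Subgroup GG) := ⟨(1, a), Subgroup.mem_top _⟩
        set gb : (⊤ : Subgroup GG) := ⟨(1, b), Subgroup.mem_top _⟩
        have h1 : ga * x * ga⁻¹ ∈ A := hAn.conj_mem x hx ga
        have h2 : gb * x * gb⁻¹ ∈ A := hAn.conj_mem x hx gb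
        haveI := hAc
        have h3 := Subgroup.mul_comm_of_mem_isMulCommutative (H := A) h1 h2
        apply hab
        have h4 := congrArg (fun z : (⊤ : Subgroup GG) => (z : GG).2) h3
        simpa using h4
  have finj : Function.Injective (fun a : A => (⟨(a.1 : GG), hsub a.1 a.2⟩ : Z)) := by
    intro a b hab
    apply Subtype.ext
    apply Subtype.ext
    exact congrArg (fun z : Z => (z : GG)) hab
  have hcard : Nat.card A ≤ 4 := cardZ ▸ Nat.card_le_card_of_injective _ finj
  have hmi := Subgroup.card_mul_index (H := A)
  rw [Subgroup.card_top, cardGG] at hmi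
  have h576 : 576 ≤ 4 * A.index := by
    calc 576 = Nat.card A * A.index := hmi.symm
    _ ≤ 4 * A.index := Nat.mul_le_mul_right _ hcard
  omega

/-- The direct product `SL(2, F₃) × SL(2, F₃)` has Jordan constant `144`. -/
theorem stmt_6 :
    jordanConstant
      (Matrix.SpecialLinearGroup (Fin 2) (ZMod 3) ×
        Matrix.SpecialLinearGroup (Fin 2) (ZMod 3)) = 144 := by
  unfold jordanConstant
  have hmem : 144 ∈ {d : ℕ | 0 < d ∧ ∀ H : Subgroup GG, Finite H →
      ∃ A : Subgroup H, A.Normal ∧ IsMulCommutative A ∧ A.index ≤ d} :=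
    ⟨by norm_num, upper⟩
  refine le_antisymm (Nat.sInf_le hmem) ?_
  exact lower _ (Nat.sInf_mem ⟨144, hmem⟩)
end

section
/- The general linear group GL(2, F₃) over the field with three elements has Jordan constant equal to 24; equivalently, the only abelian normal subgroups of GL(2, F₃) are the trivial subgroup and its center of order 2. -/
set_option maxRecDepth 100000
set_option maxHeartbeats 1000000

namespace Stmt8Aux

abbrev M3 := Matrix (Fin 2) (Fin 2) (ZMod 3)
abbrev G3 := Matrix.GeneralLinearGroup (Fin 2) (ZMod 3)

def u : G3 := ⟨!![0,1;1,0], !![0,1;1,0], by decide, by decide⟩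
def v : G3 := ⟨!![0,1;1,1], !![2,1;1,0], by decide, by decide⟩
def s : G3 := ⟨!![1,1;0,1], !![1,-1;0,1], by decide, by decide⟩
def t : G3 := ⟨!![0,-1;1,0], !![0,1;-1,0], by decide, by decide⟩

lemma gen' : ∀ a : M3, a.det ≠ 0 → a * !![1,1;0,1] = !![1,1;0,1] * a →
    a * !![0,-1;1,0] = !![0,-1;1,0] * a → a = 1 ∨ a = -1 := by decide

lemma conj' : ∀ a : M3, a.det ≠ 0 → a ≠ 1 → a ≠ -1 →
    (a * (!![0,1;1,0] * a * !![0,1;1,0]) ≠ (!![0,1;1,0] * a * !![0,1;1,0]) * a ∨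
     a * (!![0,1;1,1] * a * !![2,1;1,0]) ≠ (!![0,1;1,1] * a * !![2,1;1,0]) * a) := by decide

lemma det_ne_zero (g : G3) : ((g : M3)).det ≠ 0 := by
  have h : ((g : M3) * ((g⁻¹ : G3) : M3)) = 1 := by
    rw [← Units.val_mul, mul_inv_cancel, Units.val_one]
  have h2 : (g : M3).det * ((g⁻¹ : G3) : M3).det = 1 := by
    rw [← Matrix.det_mul, h, Matrix.det_one]
  exact left_ne_zero_of_mul_eq_one h2

lemma val_neg_one : ((-1 : G3) : M3) = -1 := by simp

lemma mem_center_iff' (g : G3) : g ∈ Subgroup.center G3 ↔ g = 1 ∨ g = -1 := by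
  constructor
  · intro h
    have hs := congrArg Units.val (Subgroup.mem_center_iff.mp h s)
    have ht := congrArg Units.val (Subgroup.mem_center_iff.mp h t)
    rcases gen' (g : M3) (det_ne_zero g) hs.symm ht.symm with h1 | h1
    · exact Or.inl (Units.ext h1)
    · exact Or.inr (Units.ext (h1.trans val_neg_one.symm))
  · rintro (rfl | rfl)
    · exact Subgroup.one_mem _
    · exact Subgroup.mem_center_iff.mpr fun h => by rw [mul_neg_one, neg_one_mul]

lemma exists_conj (a : G3) (h1 : a ≠ 1) (hm : a ≠ -1) :
    ∃ h : G3, a * (h * a * h⁻¹) ≠ (h * a * h⁻¹) * a := by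
  have e1 : (a : M3) ≠ 1 := fun e => h1 (Units.ext e)
  have em : (a : M3) ≠ -1 := fun e => hm (Units.ext (e.trans val_neg_one.symm))
  rcases conj' (a : M3) (det_ne_zero a) e1 em with hc | hc
  · exact ⟨u, fun e => hc (congrArg Units.val e)⟩
  · exact ⟨v, fun e => hc (congrArg Units.val e)⟩

lemma le_center (A : Subgroup G3) (hN : A.Normal) (hC : IsMulCommutative A) :
    A ≤ Subgroup.center G3 := by
  intro a ha
  by_contra hc
  rw [mem_center_iff'] at hc
  push_neg at hc
  obtain ⟨h, hne⟩ := exists_conj a hc.1 hc.2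
  have hmem : h * a * h⁻¹ ∈ A := hN.conj_mem a ha h
  haveI := hC
  exact hne (Subgroup.mul_comm_of_mem_isMulCommutative A ha hmem)

lemma one_ne_neg_one : (1 : G3) ≠ -1 := by
  intro e
  have := (congrArg Units.val e).trans val_neg_one
  rw [Units.val_one] at this
  exact (by decide : (1 : M3) ≠ -1) this

lemma card_center : Nat.card (Subgroup.center G3) = 2 := by
  have hset : (Subgroup.center G3 : Set G3) = {1, -1} := by
    ext g
    simpa [Set.mem_insert_iff] using mem_center_iff' g
  calc Nat.card (Subgroup.center G3)
      = ((Subgroup.center G3 : Set G3)).ncard := (Nat.card_coe_set_eq _).symm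
    _ = ({1, -1} : Set G3).ncard := by rw [hset]
    _ = 2 := Set.ncard_pair one_ne_neg_one

lemma classify (A : Subgroup G3) (hN : A.Normal) (hC : IsMulCommutative A) :
    A = ⊥ ∨ A = Subgroup.center G3 := by
  rcases eq_or_ne A ⊥ with h | h
  · exact Or.inl h
  · right
    have hle := le_center A hN hC
    obtain ⟨a, haA, ha1⟩ : ∃ a ∈ A, a ≠ 1 := by
      by_contra hx
      push_neg at hx
      exact h ((Subgroup.eq_bot_iff_forall A).mpr hx)
    have ham : a = -1 := by
      rcases (mem_center_iff' a).mp (hle haA) with h' | h'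
      · exact absurd h' ha1
      · exact h'
    subst ham
    refine le_antisymm hle fun c hc => ?_
    rcases (mem_center_iff' c).mp hc with rfl | rfl
    · exact A.one_mem
    · exact haA

lemma card_G3 : Nat.card G3 = 48 := by
  have h := Matrix.card_GL_field (𝔽 := ZMod 3) 2
  rw [h, Fin.prod_univ_two]
  norm_num [ZMod.card]

lemma mem24 : ∀ H : Subgroup G3, Finite H →
    ∃ A : Subgroup H, A.Normal ∧ IsMulCommutative A ∧ A.index ≤ 24 := by
  intro H _
  rcases le_or_gt (Nat.card H) 24 with hle | hgt
  · refine ⟨⊥, inferInstance, ⟨⟨fun a b => ?_⟩⟩, ?_⟩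
    · have ha := a.2
      have hb := b.2
      rw [Subgroup.mem_bot] at ha hb
      have : a = b := Subtype.ext (ha.trans hb.symm)
      rw [this]
    · rw [Subgroup.index_bot]
      exact hle
  · have hdvd : Nat.card H ∣ 48 := card_G3 ▸ H.card_subgroup_dvd_card
    have h48 : Nat.card H = 48 := by
      have hle48 : Nat.card H ≤ 48 := Nat.le_of_dvd (by norm_num) hdvd
      set n := Nat.card H with hn
      interval_cases n <;> omega
    have hH : H = ⊤ := Subgroup.eq_top_of_card_eq H (h48.trans card_G3.symm)
    subst hH
    have hZN : (Subgroup.center G3).Normal := by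
      constructor
      intro n hn g
      have hcomm := Subgroup.mem_center_iff.mp hn g
      have he : g * n * g⁻¹ = n := by rw [hcomm, mul_assoc, mul_inv_cancel, mul_one]
      rw [he]; exact hn
    refine ⟨(Subgroup.center G3).comap (⊤ : Subgroup G3).subtype,
      hZN.comap _,
      Subgroup.comap_injective_isMulCommutative (Subgroup.center G3) (Subgroup.subtype_injective ⊤), ?_⟩
    rw [Subgroup.index_comap, Subgroup.range_subtype, Subgroup.relIndex_top_right]
    have h1 := Subgroup.index_mul_card (Subgroup.center G3)
    rw [card_center, card_G3] at h1
    omega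

lemma lower (d : ℕ) (hd : ∀ H : Subgroup G3, Finite H →
    ∃ A : Subgroup H, A.Normal ∧ IsMulCommutative A ∧ A.index ≤ d) : 24 ≤ d := by
  obtain ⟨A, hN, hC, hidx⟩ := hd ⊤ inferInstance
  have hsurj : Function.Surjective (⊤ : Subgroup G3).subtype := fun g => ⟨⟨g, trivial⟩, rfl⟩
  set A' := A.map (⊤ : Subgroup G3).subtype with hA'
  have hN' : A'.Normal := hN.map _ hsurj
  haveI := hC
  have hC' : IsMulCommutative A' := Subgroup.map_isMulCommutative A _
  have hle : A' ≤ Subgroup.center G3 := le_center A' hN' hC'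
  have hcard : Nat.card A' ≤ 2 := by
    have := Subgroup.card_le_of_le hle
    rwa [card_center] at this
  have hpos : 0 < Nat.card A' := Nat.card_pos
  have hmul : A'.index * Nat.card A' = 48 := by
    rw [Subgroup.index_mul_card, card_G3]
  have hidx' : A'.index = A.index :=
    Subgroup.index_map_eq A hsurj (by rw [Subgroup.ker_subtype]; exact bot_le)
  have h24 : 24 ≤ A'.index := by
    interval_cases h : (Nat.card A') <;> omega
  omega

end Stmt8Aux


/-- `GL(2, F₃)` has Jordan constant `24`; equivalently, the only abelian normal subgroups of
`GL(2, F₃)` are the trivial subgroup and the center, which has order `2`. -/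
theorem stmt_8 :
    jordanConstant (Matrix.GeneralLinearGroup (Fin 2) (ZMod 3)) = 24 ∧
    (∀ A : Subgroup (Matrix.GeneralLinearGroup (Fin 2) (ZMod 3)), A.Normal → IsMulCommutative A →
      A = ⊥ ∨ A = Subgroup.center (Matrix.GeneralLinearGroup (Fin 2) (ZMod 3))) ∧
    Nat.card (Subgroup.center (Matrix.GeneralLinearGroup (Fin 2) (ZMod 3))) = 2 := by
  refine ⟨?_, Stmt8Aux.classify, Stmt8Aux.card_center⟩
  unfold jordanConstant
  have hmem : 24 ∈ {d : ℕ | 0 < d ∧ ∀ H : Subgroup Stmt8Aux.G3, Finite H →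
      ∃ A : Subgroup H, A.Normal ∧ IsMulCommutative A ∧ A.index ≤ d} :=
    ⟨by norm_num, Stmt8Aux.mem24⟩
  refine le_antisymm (Nat.sInf_le hmem) (le_csInf ⟨24, hmem⟩ ?_)
  rintro d ⟨-, hd⟩
  exact Stmt8Aux.lower d hd
end

section
/- The direct product SL(2, F₃) × C₃ of the special linear group over the field with three elements and the cyclic group of order 3 has Jordan constant equal to 12; its maximal abelian normal subgroup is the subgroup Z(SL(2, F₃)) × C₃, which is cyclic of order 6. -/
namespace Stmt9Aux

abbrev SL3 := Matrix.SpecialLinearGroup (Fin 2) (ZMod 3)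
abbrev C3 := Multiplicative (ZMod 3)
abbrev P := SL3 × C3

instance : DecidableEq SL3 := fun a b => decidable_of_iff (a.1 = b.1) Subtype.ext_iff.symm

instance : DecidablePred (· ∈ Subgroup.center SL3) :=
  fun s => decidable_of_iff (∀ g, g * s = s * g) (Subgroup.mem_center_iff).symm

set_option maxHeartbeats 4000000 in
lemma key : ∀ s : SL3, (∀ g : SL3, g * s = s * g) ∨
    ∃ g : SL3, (g * s * g⁻¹) * s ≠ s * (g * s * g⁻¹) := by decide

set_option maxHeartbeats 4000000 in
lemma cardSL : Nat.card SL3 = 24 := by rw [Nat.card_eq_fintype_card]; decide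

set_option maxHeartbeats 4000000 in
lemma cardZ : Nat.card (Subgroup.center SL3) = 2 := by
  rw [Nat.card_eq_fintype_card]; decide

lemma cardP : Nat.card P = 72 := by
  rw [Nat.card_prod, cardSL]
  simp [Nat.card_eq_fintype_card]

/-- The subgroup `Z(SL(2,F₃)) × C₃`. -/
abbrev N : Subgroup P := (Subgroup.center SL3).prod (⊤ : Subgroup C3)

lemma cardN : Nat.card N = 6 := by
  rw [Nat.card_congr ((Subgroup.center SL3).prodEquiv (⊤ : Subgroup C3)).toEquiv,
    Nat.card_prod, cardZ, Subgroup.card_top]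
  simp [Nat.card_eq_fintype_card]

lemma Ncomm : ∀ x y : P, x ∈ N → y ∈ N → x * y = y * x := by
  intro x y hx hy
  rw [Subgroup.mem_prod] at hx hy
  exact Prod.ext (Subgroup.mem_center_iff.mp hx.1 y.1).symm (mul_comm _ _)

lemma indexN : N.index = 12 := by
  have h := N.card_mul_index
  rw [cardN, cardP] at h
  omega

/-- Every element of an abelian normal subgroup of `P` has central first component. -/
lemma mem_N_of_mem {A : Subgroup P} (hn : A.Normal) (hc : IsMulCommutative A) {x : P}
    (hx : x ∈ A) : x ∈ N := by
  rw [Subgroup.mem_prod]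
  refine ⟨?_, trivial⟩
  rcases key x.1 with h | ⟨g, hg⟩
  · exact Subgroup.mem_center_iff.mpr h
  · exfalso
    have h2 : (g, (1 : C3)) * x * (g, (1 : C3))⁻¹ ∈ A := hn.conj_mem x hx _
    haveI := hc
    have h3 := Subgroup.mul_comm_of_mem_isMulCommutative (H := A) h2 hx
    apply hg
    have h4 := congrArg Prod.fst h3
    simpa using h4

lemma maxNormal : ∀ A : Subgroup P, A.Normal → IsMulCommutative A → A ≤ N :=
  fun _ hn hc _ hx => mem_N_of_mem hn hc hx

/-- the element `-1` of `SL(2,F₃)`. -/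
def w : SL3 := ⟨!![2,0;0,2], by decide⟩

set_option maxHeartbeats 1000000 in
lemma Ncyclic : IsCyclic N := by
  have hw : w ∈ Subgroup.center SL3 :=
    Subgroup.mem_center_iff.mpr (by decide)
  have hmem : ((w, Multiplicative.ofAdd (1 : ZMod 3)) : P) ∈ N :=
    Subgroup.mem_prod.mpr ⟨hw, trivial⟩
  have how : orderOf w = 2 := by
    apply orderOf_eq_prime
    · decide
    · decide
  have hoc : orderOf (Multiplicative.ofAdd (1 : ZMod 3)) = 3 := by
    apply orderOf_eq_prime
    · decide
    · decide
  apply isCyclic_of_orderOf_eq_card (⟨_, hmem⟩ : N)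
  rw [Subgroup.orderOf_mk, Prod.orderOf_mk, how, hoc, cardN]
  rfl

lemma twelve_mem : ∀ H : Subgroup P, Finite H →
    ∃ A : Subgroup H, A.Normal ∧ IsMulCommutative A ∧ A.index ≤ 12 := by
  intro H _
  refine ⟨N.subgroupOf H, inferInstance, ?_, ?_⟩
  · exact ⟨⟨fun a b => Subtype.ext (Subtype.ext (Ncomm _ _
      (Subgroup.mem_subgroupOf.mp a.2) (Subgroup.mem_subgroupOf.mp b.2)))⟩⟩
  · have hdvd : N.relIndex H ∣ N.index := Subgroup.relIndex_dvd_index_of_normal N H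
    rw [indexN] at hdvd
    exact Nat.le_of_dvd (by norm_num) hdvd

set_option synthInstance.maxHeartbeats 400000 in
set_option maxHeartbeats 1000000 in
lemma lower_bound : ∀ d : ℕ, (0 < d ∧ ∀ H : Subgroup P, Finite H →
    ∃ A : Subgroup H, A.Normal ∧ IsMulCommutative A ∧ A.index ≤ d) → 12 ≤ d := by
  rintro d ⟨-, hd⟩
  obtain ⟨A, hAn, hAc, hAi⟩ := hd ⊤ inferInstance
  -- every element of `A` (as element of `P`) lies in `N`
  have hsub : ∀ a : (⊤ : Subgroup P), a ∈ A → (a : P) ∈ N := by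
    intro a ha
    rw [Subgroup.mem_prod]
    refine ⟨?_, trivial⟩
    rcases key (a : P).1 with h | ⟨g, hg⟩
    · exact Subgroup.mem_center_iff.mpr h
    · exfalso
      set h0 : (⊤ : Subgroup P) := ⟨((g, (1 : C3)) : P), trivial⟩ with h0def
      have h2 : h0 * a * h0⁻¹ ∈ A := hAn.conj_mem a ha h0
      haveI := hAc
      have h3 := Subgroup.mul_comm_of_mem_isMulCommutative (H := A) h2 ha
      apply hg
      have h4 := congrArg (fun z : (⊤ : Subgroup P) => (z : P).1) h3
      simpa using h4
  -- so `Nat.card A ≤ 6`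
  have hinj : Function.Injective (fun a : A => (⟨(a : P), hsub a.1 a.2⟩ : N)) := by
    intro a b h
    exact Subtype.ext (Subtype.ext (congrArg (fun z : Stmt9Aux.N => z.1) h))
  have hcard : Nat.card A ≤ 6 := cardN ▸ Nat.card_le_card_of_injective _ hinj
  have hmul := A.card_mul_index
  rw [Subgroup.card_top, cardP] at hmul
  have h72 : 72 ≤ 6 * A.index := by
    calc 72 = Nat.card A * A.index := hmul.symm
    _ ≤ 6 * A.index := Nat.mul_le_mul_right _ hcard
  omega

end Stmt9Aux

/-- `SL(2, F₃) × C₃` has Jordan constant `12`; its maximal abelian normal subgroup is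
`Z(SL(2, F₃)) × C₃`, which is cyclic of order `6` and contains every abelian normal
subgroup. -/
theorem stmt_9 :
    jordanConstant (Matrix.SpecialLinearGroup (Fin 2) (ZMod 3) × Multiplicative (ZMod 3)) = 12 ∧
    (∀ A : Subgroup (Matrix.SpecialLinearGroup (Fin 2) (ZMod 3) × Multiplicative (ZMod 3)),
      A.Normal → IsMulCommutative A →
      A ≤ (Subgroup.center (Matrix.SpecialLinearGroup (Fin 2) (ZMod 3))).prod
        (⊤ : Subgroup (Multiplicative (ZMod 3)))) ∧
    Nat.card ((Subgroup.center (Matrix.SpecialLinearGroup (Fin 2) (ZMod 3))).prod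
        (⊤ : Subgroup (Multiplicative (ZMod 3)))) = 6 ∧
    IsCyclic ((Subgroup.center (Matrix.SpecialLinearGroup (Fin 2) (ZMod 3))).prod
        (⊤ : Subgroup (Multiplicative (ZMod 3)))) := by
  refine ⟨?_, Stmt9Aux.maxNormal, Stmt9Aux.cardN, Stmt9Aux.Ncyclic⟩
  unfold jordanConstant
  apply le_antisymm
  · exact Nat.sInf_le ⟨by norm_num, Stmt9Aux.twelve_mem⟩
  · exact le_csInf ⟨12, by norm_num, Stmt9Aux.twelve_mem⟩
      (fun d hd => Stmt9Aux.lower_bound d hd)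
end

section
/- Let G be a finite group with a normal subgroup K satisfying: K has order 32, the center Z(K) of K has order 2, the quotient K/Z(K) is an elementary abelian 2-group (so a 4-dimensional vector space over F₂), the quotient G/K is isomorphic to the alternating group Alt₅ on 5 letters, and the conjugation action of G on K/Z(K) is nontrivial (i.e., there exist g ∈ G and x ∈ K with gxg⁻¹x⁻¹ ∉ Z(K)). Then every nontrivial abelian normal subgroup of G is equal to Z(K), and the Jordan constant of G equals 960. -/
open Subgroup QuotientGroup MulAction

lemma aux5 {A : Type*} [Group A] [Finite A] (τ : MulAut A) (hA : Nat.card A ∣ 8)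
    (h5 : τ ^ 5 = 1) : τ = 1 := by
  have hord : orderOf τ ∣ 5 := orderOf_dvd_of_pow_eq_one h5
  -- fixed point subgroup
  let F : Subgroup A :=
    { carrier := {a | τ a = a}
      one_mem' := by simp
      mul_mem' := by intro a b ha hb; simp only [Set.mem_setOf_eq] at *; rw [map_mul, ha, hb]
      inv_mem' := by intro a ha; simp only [Set.mem_setOf_eq] at *; rw [map_inv, ha] }
  let P : Subgroup (MulAut A) := Subgroup.zpowers τ
  have hP : IsPGroup 5 P := by
    apply IsPGroup.of_card (n := if orderOf τ = 5 then 1 else 0)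
    rw [Nat.card_zpowers τ]
    rcases (Nat.prime_five.eq_one_or_self_of_dvd _ hord) with h | h <;> simp [h]
  have hfix : fixedPoints P A = (F : Set A) := by
    ext a
    constructor
    · intro h
      exact h ⟨τ, mem_zpowers τ⟩
    · rintro (ha : τ a = a) ⟨g, hg⟩
      obtain ⟨n, rfl⟩ := hg
      show (τ ^ n) a = a
      have hn : ∀ m : ℕ, (τ ^ m) a = a := by
        intro m
        induction m with
        | zero => rfl
        | succ k ih => rw [pow_succ, MulAut.mul_apply, ha, ih]
      rcases n with m | m
      · exact hn m
      · have : (τ ^ (m+1) : MulAut A) ((τ ^ Int.negSucc m) a) = (τ ^ (m+1) * τ ^ Int.negSucc m) a := rfl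
        have h2 : (τ ^ (m+1) * τ ^ Int.negSucc m : MulAut A) = 1 := by
          rw [zpow_negSucc]
          simp
        apply (τ ^ (m+1) : MulAut A).injective
        rw [this, h2, hn (m+1)]
        rfl
  haveI : Fact (Nat.Prime 5) := ⟨Nat.prime_five⟩
  have hcong := hP.card_modEq_card_fixedPoints A
  rw [hfix] at hcong
  have hcong' : Nat.card A ≡ Nat.card F [MOD 5] := by
    simpa using hcong
  have hdvd : Nat.card F ∣ Nat.card A := Subgroup.card_subgroup_dvd_card F
  have hFA : Nat.card F = Nat.card A := by
    have ha8 : Nat.card A ≤ 8 := Nat.le_of_dvd (by norm_num) hA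
    have hbpos : 0 < Nat.card F := Nat.card_pos
    have hapos : 0 < Nat.card A := Nat.card_pos
    have hba : Nat.card F ≤ Nat.card A := Nat.le_of_dvd hapos hdvd
    have hm : Nat.card A % 5 = Nat.card F % 5 := hcong'
    interval_cases h1 : Nat.card A <;> interval_cases h2 : Nat.card F <;> omega
  have hFtop : F = ⊤ := Subgroup.eq_top_of_card_eq F hFA
  ext a
  have : a ∈ F := hFtop ▸ Subgroup.mem_top a
  exact this


section Core
variable {G : Type*} [Group G] (K : Subgroup G) [hKn : K.Normal]

noncomputable def sigma (g : G) : (K ⧸ center K) ≃* (K ⧸ center K) :=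
  QuotientGroup.congr (center K) (center K) (MulAut.conjNormal g)
    (Subgroup.characteristic_iff_map_eq.mp inferInstance (MulAut.conjNormal g))

lemma sigma_apply (g : G) (x : K) :
    sigma K g (QuotientGroup.mk x) = QuotientGroup.mk (MulAut.conjNormal g x) := rfl

lemma sigma_mul (g h : G) (v : K ⧸ center K) :
    sigma K g (sigma K h v) = sigma K (g * h) v := by
  induction v using QuotientGroup.induction_on with
  | H x =>
    rw [sigma_apply, sigma_apply, sigma_apply]
    congr 1
    ext
    simp [MulAut.conjNormal_apply, mul_assoc]

variable (hElem : ∀ q : K ⧸ Subgroup.center K, q * q = 1)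

include hElem in
omit hKn in
lemma V_comm (a b : K ⧸ center K) : a * b = b * a := by
  have h1 : a * b = (a * b)⁻¹ := by
    rw [eq_inv_iff_mul_eq_one]; exact hElem _
  rw [h1, mul_inv_rev]
  have ha : a⁻¹ = a := by rw [inv_eq_iff_mul_eq_one]; exact hElem a
  have hb : b⁻¹ = b := by rw [inv_eq_iff_mul_eq_one]; exact hElem b
  rw [ha, hb]


include hElem in
lemma sigma_mem_K {k : G} (hk : k ∈ K) : ∀ v, sigma K k v = v := by
  intro v
  induction v using QuotientGroup.induction_on with
  | H x =>
    rw [sigma_apply]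
    rw [QuotientGroup.eq]
    set c : K := ⟨k, hk⟩ with hc
    have hcen : (x * c)⁻¹ * (c * x) ∈ center K := by
      have := V_comm K hElem (QuotientGroup.mk x : K ⧸ center K) (QuotientGroup.mk c)
      rw [← QuotientGroup.mk_mul, ← QuotientGroup.mk_mul, QuotientGroup.eq] at this
      exact this
    have h2 : (c * ((x * c)⁻¹ * (c * x)) * c⁻¹)⁻¹ ∈ center K :=
      Subgroup.inv_mem _ (Subgroup.Normal.conj_mem inferInstance _ hcen c)
    convert h2 using 1
    ext
    push_cast [hc]
    rw [show ((MulAut.conjNormal k) x : G) = k * x * k⁻¹ from MulAut.conjNormal_apply k x]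
    group


include hElem in
lemma sigma_g5 [Finite G] (hK32 : Nat.card K = 32) (hZ2 : Nat.card (center K) = 2)
    (W : Subgroup (K ⧸ center K)) (hWb : W ≠ ⊥) (hWt : W ≠ ⊤)
    (hWinv : ∀ g : G, ∀ v ∈ W, sigma K g v ∈ W)
    {g : G} (hg5 : g ^ 5 ∈ K) : ∀ v, sigma K g v = v := by
  haveI hWn : W.Normal := by
    constructor
    intro n hn m
    have h := V_comm K hElem m n
    have : m * n * m⁻¹ = n := by rw [h, mul_assoc, mul_inv_cancel, mul_one]
    rwa [this]
  have hmap : ∀ g : G, W.map ((sigma K g : (K ⧸ center K) ≃* (K ⧸ center K)) :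
      (K ⧸ center K) →* (K ⧸ center K)) = W := by
    intro g
    apply le_antisymm
    · rintro _ ⟨w, hw, rfl⟩
      exact hWinv g w hw
    · intro v hv
      refine ⟨sigma K g⁻¹ v, hWinv g⁻¹ v hv, ?_⟩
      show sigma K g (sigma K g⁻¹ v) = v
      rw [sigma_mul, mul_inv_cancel]
      have := sigma_mem_K K hElem (one_mem K) v
      simpa using this
  -- cardinalities
  have hcardV : Nat.card (K ⧸ center K) = 16 := by
    have h := Subgroup.card_eq_card_quotient_mul_card_subgroup (center K)
    rw [hK32, hZ2] at h
    omega
  have hfin : Finite (K ⧸ center K) := by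
    have : Finite K := inferInstance
    exact Quotient.finite _
  have hcardW : Nat.card W ∣ 8 := by
    have h1 : Nat.card W ∣ 16 := hcardV ▸ Subgroup.card_subgroup_dvd_card W
    have h2 : Nat.card W ≠ 16 := by
      intro h
      exact hWt (Subgroup.eq_top_of_card_eq W (h.trans hcardV.symm))
    have h3 : Nat.card W ≤ 16 := Nat.le_of_dvd (by norm_num) h1
    interval_cases h : Nat.card W <;> first | rfl | (exfalso; revert h1 h2; decide) | decide
  have hcardQ : Nat.card (_ ⧸ W) ∣ 8 := by
    have h := Subgroup.card_eq_card_quotient_mul_card_subgroup W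
    rw [hcardV] at h
    have hW1 : Nat.card W ≠ 1 := by
      intro h1
      exact hWb (Subgroup.card_eq_one.mp h1)
    have hWpos : 0 < Nat.card W := Nat.card_pos
    have hW2 : 2 ≤ Nat.card W := by omega
    have h3 : Nat.card (_ ⧸ W) ≤ 8 := by nlinarith [Nat.card_pos (α := (K ⧸ center K) ⧸ W)]
    have h4 : Nat.card (_ ⧸ W) ∣ 16 := Dvd.intro _ h.symm
    interval_cases h : Nat.card ((K ⧸ center K) ⧸ W) <;>
      first | rfl | (exfalso; revert h4; decide) | decide
  -- the automorphism restricted to W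
  have hsig5 : ∀ v : K ⧸ center K,
      sigma K g (sigma K g (sigma K g (sigma K g (sigma K g v)))) = v := by
    intro v
    rw [sigma_mul, sigma_mul, sigma_mul, sigma_mul,
      show g * g * g * g * g = g ^ 5 by rw [pow_succ, pow_succ, pow_succ, pow_succ, pow_one]]
    exact sigma_mem_K K hElem hg5 v
  let τ : W ≃* W :=
    ((sigma K g).subgroupMap W).trans (MulEquiv.subgroupCongr (hmap g))
  have hτval : ∀ w : W, (τ w : K ⧸ center K) = sigma K g w := fun w => rfl
  have hτ5 : τ ^ 5 = 1 := by
    ext w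
    have : ((τ ^ 5) w : K ⧸ center K) = τ (τ (τ (τ (τ w)))) := by
      rw [show τ ^ 5 = τ * τ * τ * τ * τ by
        rw [pow_succ, pow_succ, pow_succ, pow_succ, pow_one]]
      rfl
    rw [this, hτval, hτval, hτval, hτval, hτval, hsig5]
    rfl
  have hτ1 : τ = 1 := aux5 τ hcardW hτ5
  have hfixW : ∀ v ∈ W, sigma K g v = v := by
    intro v hv
    have h := DFunLike.congr_fun hτ1 (⟨v, hv⟩ : W)
    have h2 := congrArg Subtype.val h
    rw [hτval] at h2
    exact h2
  -- the automorphism on the quotient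
  let τ' : ((K ⧸ center K) ⧸ W) ≃* ((K ⧸ center K) ⧸ W) :=
    QuotientGroup.congr W W (sigma K g) (hmap g)
  have hτ'val : ∀ v : K ⧸ center K,
      τ' (QuotientGroup.mk v) = QuotientGroup.mk (sigma K g v) := fun v => rfl
  have hτ'5 : τ' ^ 5 = 1 := by
    ext q
    induction q using QuotientGroup.induction_on with
    | H v =>
      have : (τ' ^ 5) (QuotientGroup.mk v) = τ' (τ' (τ' (τ' (τ' (QuotientGroup.mk v))))) := by
        rw [show τ' ^ 5 = τ' * τ' * τ' * τ' * τ' by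
          rw [pow_succ, pow_succ, pow_succ, pow_succ, pow_one]]
        rfl
      rw [this, hτ'val, hτ'val, hτ'val, hτ'val, hτ'val, hsig5]
      rfl
  have hτ'1 : τ' = 1 := aux5 τ' hcardQ hτ'5
  have hmemW : ∀ v : K ⧸ center K, (sigma K g v)⁻¹ * v ∈ W := by
    intro v
    have h1 : τ' (QuotientGroup.mk v) = QuotientGroup.mk v := by rw [hτ'1]; rfl
    rw [hτ'val] at h1
    exact (QuotientGroup.eq).mp h1
  -- sigma g squared is the identity
  have hsq : ∀ v : K ⧸ center K, sigma K g (sigma K g v) = v := by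
    intro v
    set w := (sigma K g v)⁻¹ * v with hw
    have hwW : w ∈ W := hmemW v
    have hv : sigma K g v = v * w⁻¹ := by
      rw [hw]
      group
    calc sigma K g (sigma K g v) = sigma K g (v * w⁻¹) := by rw [← hv]
      _ = sigma K g v * sigma K g w⁻¹ := by rw [map_mul]
      _ = v * w⁻¹ * w⁻¹ := by rw [hv, hfixW w⁻¹ (inv_mem hwW)]
      _ = v * (w⁻¹ * w⁻¹) := by rw [mul_assoc]
      _ = v := by rw [hElem w⁻¹, mul_one]
  -- conclude
  have hA : ∀ v : K ⧸ center K, sigma K (g * g) v = v := by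
    intro v
    rw [← sigma_mul]
    exact hsq v
  intro v
  have hkey : g = (g * g) * ((g * g) * ((g * g) * (g ^ 5)⁻¹)) := by group
  calc sigma K g v = sigma K ((g * g) * ((g * g) * ((g * g) * (g ^ 5)⁻¹))) v := by rw [← hkey]
    _ = sigma K (g * g) (sigma K ((g * g) * ((g * g) * (g ^ 5)⁻¹)) v) :=
        (sigma_mul K (g * g) ((g * g) * ((g * g) * (g ^ 5)⁻¹)) v).symm
    _ = sigma K (g * g) (sigma K (g * g) (sigma K ((g * g) * (g ^ 5)⁻¹) v)) :=
        congrArg (sigma K (g * g)) (sigma_mul K (g * g) ((g * g) * (g ^ 5)⁻¹) v).symm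
    _ = sigma K (g * g) (sigma K (g * g) (sigma K (g * g) (sigma K ((g ^ 5)⁻¹) v))) :=
        congrArg (sigma K (g * g)) (congrArg (sigma K (g * g))
          (sigma_mul K (g * g) ((g ^ 5)⁻¹) v).symm)
    _ = v := by rw [sigma_mem_K K hElem (inv_mem hg5) v, hA, hA, hA]

end Core

/-- Let `G` be a finite group with a normal subgroup `K` of order `32` whose center `Z(K)`
has order `2`, such that `K/Z(K)` is an elementary abelian `2`-group, `G/K ≅ Alt₅`, and
the conjugation action of `G` on `K/Z(K)` is nontrivial. Then every nontrivial abelian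
normal subgroup of `G` equals `Z(K)`, and the Jordan constant of `G` is `960`. -/
theorem stmt_10 (G : Type*) [Group G] [Finite G] (K : Subgroup G) (hKn : K.Normal)
    (hK32 : Nat.card K = 32)
    (hZ2 : Nat.card (Subgroup.center K) = 2)
    (hElem : ∀ q : K ⧸ Subgroup.center K, q * q = 1)
    (hQuot : Nonempty ((G ⧸ K) ≃* alternatingGroup (Fin 5)))
    (hNontriv : ∃ g x : G, x ∈ K ∧
      g * x * g⁻¹ * x⁻¹ ∉ (Subgroup.center K).map K.subtype) :
    (∀ N : Subgroup G, N.Normal → IsMulCommutative N → N ≠ ⊥ →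
      N = (Subgroup.center K).map K.subtype) ∧
    jordanConstant G = 960 := by
  haveI := hKn
  set Z' : Subgroup G := (Subgroup.center K).map K.subtype with hZ'
  -- basic facts about Z'
  have hZle : Z' ≤ K := Subgroup.map_subtype_le _
  have hZcard : Nat.card Z' = 2 := by
    rw [← hZ2]
    exact (Nat.card_congr ((Subgroup.center K).equivMapOfInjective K.subtype
      K.subtype_injective).toEquiv).symm
  have hZcomm : ∀ c ∈ Z', ∀ y ∈ K, c * y = y * c := by
    rintro _ ⟨z, hz, rfl⟩ y hy
    have := (Subgroup.mem_center_iff.mp hz ⟨y, hy⟩)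
    exact (congrArg Subtype.val this).symm
  have hZnormal : Z'.Normal := by
    constructor
    rintro _ ⟨z, hz, rfl⟩ g
    refine ⟨⟨g * z * g⁻¹, hKn.conj_mem _ z.2 g⟩, ?_, rfl⟩
    rw [SetLike.mem_coe] at hz ⊢
    rw [Subgroup.mem_center_iff]
    rintro ⟨y, hy⟩
    have h := congrArg Subtype.val (Subgroup.mem_center_iff.mp hz ⟨g⁻¹ * y * g,
      by simpa using hKn.conj_mem _ hy g⁻¹⟩)
    refine Subtype.ext ?_
    show (y : G) * (g * z * g⁻¹) = g * z * g⁻¹ * y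
    simp only [Subgroup.coe_mul] at h
    calc (y : G) * (g * z * g⁻¹) = g * (g⁻¹ * y * g * z) * g⁻¹ := by group
      _ = g * (z * (g⁻¹ * y * g)) * g⁻¹ := by rw [h]
      _ = g * z * g⁻¹ * y := by group
  -- facts about the quotient
  obtain ⟨e⟩ := hQuot
  have hQcard : Nat.card (G ⧸ K) = 60 := by
    have hperm : Nat.card (Equiv.Perm (Fin 5)) = 120 := by
      rw [Nat.card_eq_fintype_card, Fintype.card_perm, Fintype.card_fin]
      norm_num [Nat.factorial]
    have halt : 2 * Nat.card (alternatingGroup (Fin 5)) = Nat.card (Equiv.Perm (Fin 5)) := by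
      rw [Nat.card_eq_fintype_card, Nat.card_eq_fintype_card]
      exact two_mul_card_alternatingGroup
    rw [Nat.card_congr e.toEquiv]
    omega
  haveI : Nontrivial (G ⧸ K) := e.toEquiv.nontrivial
  haveI hQsimple : IsSimpleGroup (G ⧸ K) :=
    IsSimpleGroup.isSimpleGroup_of_surjective e.symm.toMonoidHom e.symm.surjective
  have hGcard : Nat.card G = 1920 := by
    have h := Subgroup.card_eq_card_quotient_mul_card_subgroup K
    rw [hQcard, hK32] at h
    omega
  -- Part 1
  have res1 : ∀ N : Subgroup G, N.Normal → IsMulCommutative N → N ≠ ⊥ → N = Z' := by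
    intro N hNn hNc hNb
    haveI := hNc
    -- N is contained in K
    have hNK : N ≤ K := by
      have hMn : (N.map (QuotientGroup.mk' K)).Normal :=
        Subgroup.Normal.map hNn _ (QuotientGroup.mk'_surjective K)
      rcases hMn.eq_bot_or_eq_top with h | h
      · rw [Subgroup.map_eq_bot_iff, QuotientGroup.ker_mk'] at h
        exact h
      · exfalso
        have hcomm : ∀ a b : G ⧸ K, a * b = b * a := by
          intro a b
          have ha : a ∈ N.map (QuotientGroup.mk' K) := h ▸ Subgroup.mem_top a
          have hb : b ∈ N.map (QuotientGroup.mk' K) := h ▸ Subgroup.mem_top b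
          obtain ⟨x, hx, rfl⟩ := ha
          obtain ⟨y, hy, rfl⟩ := hb
          rw [← map_mul, ← map_mul, Subgroup.mul_comm_of_mem_isMulCommutative N hx hy]
        letI : CommGroup (G ⧸ K) :=
          { (inferInstance : Group (G ⧸ K)) with mul_comm := hcomm }
        have hp := IsSimpleGroup.prime_card (α := G ⧸ K)
        rw [hQcard] at hp
        norm_num at hp
    -- the image W of N in K/Z(K)
    set W : Subgroup (K ⧸ center K) := (N.subgroupOf K).map (QuotientGroup.mk' (center K))
      with hW
    by_cases hWb : W = ⊥
    · -- then N ≤ Z' and N = Z'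
      have hNZ : N ≤ Z' := by
        intro n hn
        have hnK : n ∈ K := hNK hn
        have hmem : QuotientGroup.mk' (center K) ⟨n, hnK⟩ ∈ W :=
          ⟨⟨n, hnK⟩, by rw [SetLike.mem_coe, Subgroup.mem_subgroupOf]; exact hn, rfl⟩
        rw [hWb, Subgroup.mem_bot] at hmem
        have hcen : (⟨n, hnK⟩ : K) ∈ center K := (QuotientGroup.eq_one_iff _).mp hmem
        exact ⟨⟨n, hnK⟩, hcen, rfl⟩
      have h1 : Nat.card N ∣ 2 := hZcard ▸ Subgroup.card_dvd_of_le hNZ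
      have h2 : Nat.card N ≠ 1 := fun h => hNb (Subgroup.card_eq_one.mp h)
      have h3 : Nat.card N = 2 := by
        rcases (Nat.prime_two.eq_one_or_self_of_dvd _ h1) with h | h
        · exact absurd h h2
        · exact h
      exact Subgroup.eq_of_le_of_card_ge hNZ (by rw [hZcard, h3])
    · exfalso
      by_cases hWt : W = ⊤
      · -- then K is commutative, contradiction
        have hKcomm : ∀ a b : K, a * b = b * a := by
          have hdecomp : ∀ a : K, ∃ na : K, (na : G) ∈ N ∧ a⁻¹ * na ∈ center K := by
            intro a
            have : QuotientGroup.mk' (center K) a ∈ W := hWt ▸ Subgroup.mem_top _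
            obtain ⟨na, hna, hmk⟩ := this
            refine ⟨na, (Subgroup.mem_subgroupOf).mp hna, ?_⟩
            have := (QuotientGroup.eq (s := center K)).mp hmk.symm
            exact this
          intro a b
          obtain ⟨na, hna, hza⟩ := hdecomp a
          obtain ⟨nb, hnb, hzb⟩ := hdecomp b
          set za := a⁻¹ * na with hzaeq
          set zb := b⁻¹ * nb with hzbeq
          have ha : a = na * za⁻¹ := by rw [hzaeq]; group
          have hb : b = nb * zb⁻¹ := by rw [hzbeq]; group
          have hcen_a := Subgroup.mem_center_iff.mp (inv_mem hza)
          have hcen_b := Subgroup.mem_center_iff.mp (inv_mem hzb)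
          have hnn : na * nb = nb * na := by
            refine Subtype.ext ?_
            exact Subgroup.mul_comm_of_mem_isMulCommutative N hna hnb
          calc a * b = na * za⁻¹ * (nb * zb⁻¹) := by rw [← ha, ← hb]
            _ = na * (za⁻¹ * nb) * zb⁻¹ := by group
            _ = na * (nb * za⁻¹) * zb⁻¹ := by rw [hcen_a nb]
            _ = na * nb * (za⁻¹ * zb⁻¹) := by group
            _ = nb * na * (za⁻¹ * zb⁻¹) := by rw [hnn]
            _ = nb * (na * za⁻¹) * zb⁻¹ := by group
            _ = nb * (zb⁻¹ * (na * za⁻¹)) := by rw [← hcen_b (na * za⁻¹)]; group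
            _ = b * a := by rw [← ha, hb]; group
        have hle : (⊤ : Subgroup K) ≤ center K := fun a _ =>
          Subgroup.mem_center_iff.mpr fun b => hKcomm b a
        have := Subgroup.card_dvd_of_le hle
        rw [Subgroup.card_top, hK32, hZ2] at this
        norm_num at this
      · -- middle case : W is proper and nontrivial
        have hWinv : ∀ g : G, ∀ v ∈ W, sigma K g v ∈ W := by
          rintro g _ ⟨x, hx, rfl⟩
          refine ⟨MulAut.conjNormal g x, ?_, ?_⟩
          · rw [SetLike.mem_coe, Subgroup.mem_subgroupOf] at hx ⊢
            have : ((MulAut.conjNormal g x : K) : G) = g * x * g⁻¹ :=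
              MulAut.conjNormal_apply g x
            rw [this]
            exact hNn.conj_mem _ hx g
          · exact (sigma_apply K g x).symm
        have hT : ∀ g : G, ∀ v, sigma K g v = v := by
          set T : Subgroup G :=
            { carrier := {g : G | ∀ v, sigma K g v = v}
              one_mem' := fun v => by
                have := sigma_mem_K K hElem (one_mem K) v
                simpa using this
              mul_mem' := by
                intro a b ha hb
                intro v
                rw [← sigma_mul, hb, ha]
              inv_mem' := by
                intro a ha v
                have h1 : sigma K a (sigma K a⁻¹ v) = v := by
                  rw [sigma_mul, mul_inv_cancel]
                  simpa using sigma_mem_K K hElem (one_mem K) v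
                rw [ha (sigma K a⁻¹ v)] at h1
                exact h1 } with hTdef
          have hTn : T.Normal := by
            constructor
            intro n hn m v
            have h1 : sigma K (m * n * m⁻¹) v = sigma K m (sigma K n (sigma K m⁻¹ v)) := by
              rw [sigma_mul, sigma_mul]
            rw [h1, hn (sigma K m⁻¹ v), sigma_mul, mul_inv_cancel]
            simpa using sigma_mem_K K hElem (one_mem K) v
          have hKT : K ≤ T := fun k hk v => sigma_mem_K K hElem hk v
          haveI : Fact (Nat.Prime 5) := ⟨Nat.prime_five⟩
          obtain ⟨q, hq⟩ := exists_prime_orderOf_dvd_card' (G := G ⧸ K) 5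
            (by rw [hQcard]; norm_num)
          obtain ⟨g, rfl⟩ := QuotientGroup.mk'_surjective K q
          have hg5 : g ^ 5 ∈ K := by
            have h1 : ((QuotientGroup.mk' K) g) ^ 5 = 1 := by
              rw [← hq]; exact pow_orderOf_eq_one _
            rw [← map_pow] at h1
            exact (QuotientGroup.eq_one_iff _).mp h1
          have hgT : g ∈ T := sigma_g5 K hElem hK32 hZ2 W hWb hWt hWinv hg5
          have hTtop : T = ⊤ := by
            have hMn : (T.map (QuotientGroup.mk' K)).Normal :=
              Subgroup.Normal.map hTn _ (QuotientGroup.mk'_surjective K)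
            rcases hMn.eq_bot_or_eq_top with h | h
            · exfalso
              have : QuotientGroup.mk' K g ∈ T.map (QuotientGroup.mk' K) :=
                ⟨g, hgT, rfl⟩
              rw [h, Subgroup.mem_bot] at this
              rw [this] at hq
              simp at hq
            · have h2 := congrArg (Subgroup.comap (QuotientGroup.mk' K)) h
              rw [Subgroup.comap_map_eq, QuotientGroup.ker_mk', Subgroup.comap_top,
                sup_of_le_left hKT] at h2
              exact h2
          intro g v
          exact (hTtop ▸ Subgroup.mem_top g : g ∈ T) v
        obtain ⟨g, x, hxK, hgx⟩ := hNontriv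
        apply hgx
        have hsig := hT g (QuotientGroup.mk ⟨x, hxK⟩)
        rw [sigma_apply] at hsig
        have hc : ((MulAut.conjNormal g ⟨x, hxK⟩ : K) : G)⁻¹ * x ∈ Z' := by
          refine ⟨(MulAut.conjNormal g ⟨x, hxK⟩)⁻¹ * ⟨x, hxK⟩, (QuotientGroup.eq).mp hsig, rfl⟩
        have hval : ((MulAut.conjNormal g ⟨x, hxK⟩ : K) : G) = g * x * g⁻¹ :=
          MulAut.conjNormal_apply g ⟨x, hxK⟩
        rw [hval] at hc
        have hcinv : x⁻¹ * (g * x * g⁻¹) ∈ Z' := by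
          have := Subgroup.inv_mem Z' hc
          simpa [mul_assoc] using this
        have hcomm := hZcomm _ hcinv x hxK
        have hxc : x * (x⁻¹ * (g * x * g⁻¹)) = g * x * g⁻¹ := by group
        have heq : g * x * g⁻¹ * x⁻¹ = x⁻¹ * (g * x * g⁻¹) := by
          calc g * x * g⁻¹ * x⁻¹ = x * (x⁻¹ * (g * x * g⁻¹)) * x⁻¹ := by rw [hxc]
            _ = x⁻¹ * (g * x * g⁻¹) * x * x⁻¹ := by rw [← hcomm]
            _ = x⁻¹ * (g * x * g⁻¹) := by group
        rw [heq]
        exact hcinv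
  refine ⟨res1, ?_⟩
  haveI hZcommI : IsMulCommutative Z' :=
    ⟨⟨fun a b => Subtype.ext (hZcomm a a.2 b (hZle b.2))⟩⟩
  have hmem960 : 0 < 960 ∧ ∀ H : Subgroup G, Finite H →
      ∃ A : Subgroup H, A.Normal ∧ IsMulCommutative A ∧ A.index ≤ 960 := by
    refine ⟨by norm_num, ?_⟩
    intro H _
    by_cases hH : H = ⊤
    · subst hH
      haveI := hZnormal
      refine ⟨Z'.subgroupOf ⊤, inferInstance, inferInstance, ?_⟩
      show Z'.relIndex ⊤ ≤ 960
      rw [Subgroup.relIndex_top_right]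
      have h := Subgroup.index_mul_card Z'
      rw [hZcard, hGcard] at h
      omega
    · have hbc : IsMulCommutative (⊥ : Subgroup H) :=
        ⟨⟨fun a b => by
          have ha := a.2
          have hb := b.2
          rw [Subgroup.mem_bot] at ha hb
          refine Subtype.ext ?_
          rw [Subgroup.coe_mul, Subgroup.coe_mul, ha, hb]⟩⟩
      refine ⟨⊥, inferInstance, hbc, ?_⟩
      rw [Subgroup.index_bot]
      have hdvd : Nat.card H ∣ 1920 := hGcard ▸ Subgroup.card_subgroup_dvd_card H
      have hne : Nat.card H ≠ 1920 := by
        intro h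
        exact hH (Subgroup.eq_top_of_card_eq H (h.trans hGcard.symm))
      obtain ⟨c, hc⟩ := hdvd
      rcases Nat.lt_or_ge c 2 with h2 | h2
      · interval_cases c <;> omega
      · have h3 : Nat.card H * 2 ≤ Nat.card H * c := Nat.mul_le_mul_left _ h2
        omega
  have hlow : ∀ d ∈ {d : ℕ | 0 < d ∧ ∀ H : Subgroup G, Finite H → ∃ A : Subgroup H,
      A.Normal ∧ IsMulCommutative A ∧ A.index ≤ d}, 960 ≤ d := by
    rintro d ⟨hd0, hd⟩
    obtain ⟨A, hAn, hAc, hAi⟩ := hd ⊤ inferInstance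
    haveI := hAc
    have hcardtop : Nat.card (⊤ : Subgroup G) = 1920 := by rw [Subgroup.card_top, hGcard]
    have hidx : A.index * Nat.card A = 1920 := by
      rw [Subgroup.index_mul_card]; exact hcardtop
    by_cases hA : A = ⊥
    · subst hA
      rw [Subgroup.index_bot, hcardtop] at hAi
      omega
    · set A' := A.map (⊤ : Subgroup G).subtype with hA'def
      have hA'n : A'.Normal := by
        constructor
        rintro _ ⟨a, ha, rfl⟩ g
        exact ⟨⟨g, Subgroup.mem_top g⟩ * a * ⟨g, Subgroup.mem_top g⟩⁻¹,
          hAn.conj_mem a ha ⟨g, Subgroup.mem_top g⟩, rfl⟩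
      have hA'c : IsMulCommutative A' := inferInstance
      have hA'b : A' ≠ ⊥ := by
        intro h
        apply hA
        rw [hA'def] at h
        exact (Subgroup.map_eq_bot_iff_of_injective A
          (Subgroup.subtype_injective _)).mp h
      have hA'Z : A' = Z' := res1 A' hA'n hA'c hA'b
      have hcA : Nat.card A = 2 := by
        have h1 : Nat.card A' = 2 := by rw [hA'Z]; exact hZcard
        rw [← h1]
        exact Nat.card_congr (A.equivMapOfInjective _
          (Subgroup.subtype_injective _)).toEquiv
      rw [hcA] at hidx
      omega
  unfold jordanConstant
  exact le_antisymm (Nat.sInf_le hmem960) (le_csInf ⟨960, hmem960⟩ hlow)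
end

section
/- Let ρ : Alt₅ → GL(4, F₂) be a nontrivial group homomorphism, giving F₂⁴ the structure of an Alt₅-representation over F₂. Then this representation is irreducible: every F₂-subspace of F₂⁴ that is invariant under ρ(g) for all g ∈ Alt₅ is either the zero subspace or all of F₂⁴. -/
open Matrix MulAction

private lemma zpow_smul_fix {G M : Type*} [Group G] [MulAction G M] (u : G) (x : M)
    (h : u • x = x) : ∀ n : ℤ, u ^ n • x = x := by
  intro n
  induction n using Int.induction_on with
  | zero => simp
  | succ n ih => rw [_root_.zpow_add, zpow_one, mul_smul, h, ih]
  | pred n ih => rw [_root_.zpow_sub, zpow_one, mul_smul, ← h]; rw [inv_smul_smul, ih, h]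

private lemma key_s12 {M : Type*} [AddCommGroup M] [Module (ZMod 2) M] [Finite M]
    (e : Module.End (ZMod 2) M) (he5 : e ^ 5 = 1) (hne : e ≠ 1)
    (hdim : Module.finrank (ZMod 2) M ≤ 3) : False := by
  classical
  haveI := Fintype.ofFinite M
  haveI : Fact (Nat.Prime 5) := ⟨by norm_num⟩
  have h54 : ∀ x : M, e ((e ^ 4) x) = x := by
    intro x
    have : (e * e ^ 4) x = (1 : Module.End (ZMod 2) M) x := by rw [← pow_succ' e 4, he5]
    simpa [Module.End.mul_apply] using this
  have h45 : ∀ x : M, (e ^ 4) (e x) = x := by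
    intro x
    have : (e ^ 4 * e) x = (1 : Module.End (ZMod 2) M) x := by rw [← pow_succ e 4, he5]
    simpa [Module.End.mul_apply] using this
  set σ : Equiv.Perm M := ⟨⇑e, ⇑(e ^ 4), h45, h54⟩ with hσ
  have hσ_apply : ∀ x : M, σ x = e x := fun x => rfl
  have hpow : ∀ (n : ℕ) (x : M), (σ ^ n) x = (e ^ n) x := by
    intro n
    induction n with
    | zero => intro x; simp
    | succ n ih =>
      intro x
      rw [pow_succ, pow_succ, Equiv.Perm.mul_apply, Module.End.mul_apply, hσ_apply, ih]
  have hσ5 : σ ^ 5 = 1 := by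
    ext x
    rw [hpow 5 x, he5]; rfl
  have hσne : σ ≠ 1 := by
    intro h
    apply hne
    ext x
    have := congrArg (fun p : Equiv.Perm M => p x) h
    simpa [hσ_apply] using this
  have horder : orderOf σ = 5 := orderOf_eq_prime hσ5 hσne
  set G := Subgroup.zpowers σ with hG
  have hpG : IsPGroup 5 G := IsPGroup.of_card (n := 1) (by rw [Nat.card_zpowers, horder, pow_one])
  have hcong := hpG.card_modEq_card_fixedPoints M
  set F : Submodule (ZMod 2) M := LinearMap.ker (e - 1) with hF
  have hsets : fixedPoints G M = (F : Set M) := by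
    ext x
    simp only [mem_fixedPoints, SetLike.mem_coe, hF, LinearMap.mem_ker, LinearMap.sub_apply,
      Module.End.one_apply, sub_eq_zero]
    constructor
    · intro h
      have := h ⟨σ, Subgroup.mem_zpowers σ⟩
      simpa [hσ_apply] using this
    · intro h g
      obtain ⟨n, hn⟩ := g.2
      have hx : σ • x = x := h
      have : σ ^ n • x = x := zpow_smul_fix σ x hx n
      calc g • x = (g : Equiv.Perm M) • x := rfl
        _ = x := by rw [← hn]; exact this
  have hcards : Nat.card (fixedPoints G M) = Nat.card F :=
    Nat.card_congr (Equiv.setCongr hsets)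
  have hMcard : Nat.card M = 2 ^ Module.finrank (ZMod 2) M := by
    rw [Nat.card_eq_fintype_card, Module.card_eq_pow_finrank (K := ZMod 2), ZMod.card]
  have hFcard : Nat.card F = 2 ^ Module.finrank (ZMod 2) F := by
    rw [Nat.card_eq_fintype_card, Module.card_eq_pow_finrank (K := ZMod 2), ZMod.card]
  have hFlt : F < ⊤ := by
    rcases lt_or_eq_of_le (le_top (a := F)) with h | h
    · exact h
    · exfalso
      apply hne
      ext x
      have : x ∈ F := h.symm ▸ Submodule.mem_top
      simpa [hF, sub_eq_zero] using (LinearMap.mem_ker.mp this)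
  have hlt : Module.finrank (ZMod 2) F < Module.finrank (ZMod 2) M :=
    Submodule.finrank_lt hFlt.ne
  rw [hcards, hMcard, hFcard] at hcong
  set a := Module.finrank (ZMod 2) M
  set k := Module.finrank (ZMod 2) F
  interval_cases a <;> interval_cases k <;> simp_all [Nat.ModEq]

/-- If `ρ : Alt₅ → GL(4, F₂)` is a nontrivial homomorphism, then the resulting
representation of `Alt₅` on `F₂⁴` is irreducible: every subspace of `F₂⁴` invariant
under all `ρ g` is `⊥` or `⊤`. -/
theorem stmt_12 (ρ : alternatingGroup (Fin 5) →* Matrix.GeneralLinearGroup (Fin 4) (ZMod 2))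
    (hρ : ρ ≠ 1)
    (W : Submodule (ZMod 2) (Fin 4 → ZMod 2))
    (hW : ∀ g : alternatingGroup (Fin 5), ∀ v ∈ W,
      Matrix.mulVec (ρ g : Matrix (Fin 4) (Fin 4) (ZMod 2)) v ∈ W) :
    W = ⊥ ∨ W = ⊤ := by
  by_contra hc
  push_neg at hc
  obtain ⟨hWbot, hWtop⟩ := hc
  set A : alternatingGroup (Fin 5) → Matrix (Fin 4) (Fin 4) (ZMod 2) :=
    fun g => (ρ g : Matrix (Fin 4) (Fin 4) (ZMod 2)) with hA
  have hW' : ∀ g, ∀ v ∈ W, A g *ᵥ v ∈ W := hW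
  have hAmul : ∀ a b, A (a * b) = A a * A b := by
    intro a b; simp [hA, _root_.map_mul]
  have hA1 : A 1 = 1 := by simp [hA]
  have hinv : ∀ g (v : Fin 4 → ZMod 2), A g⁻¹ *ᵥ (A g *ᵥ v) = v := by
    intro g v
    rw [mulVec_mulVec, ← hAmul, inv_mul_cancel, hA1, one_mulVec]
  have hinv' : ∀ g (v : Fin 4 → ZMod 2), A g *ᵥ (A g⁻¹ *ᵥ v) = v := by
    intro g v
    have := hinv g⁻¹ v
    rwa [inv_inv] at this
  -- the two elements we need
  have h5mem : finRotate 5 ∈ alternatingGroup (Fin 5) := by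
    rw [Equiv.Perm.mem_alternatingGroup]
    rw [sign_finRotate]
    decide
  set g₅ : alternatingGroup (Fin 5) := ⟨finRotate 5, h5mem⟩ with hg₅
  have hg₅5 : g₅ ^ 5 = 1 := by
    ext : 1
    show (finRotate 5 : Equiv.Perm (Fin 5)) ^ 5 = 1
    decide
  have hg₅ne : g₅ ≠ 1 := by
    intro h
    have : (finRotate 5 : Equiv.Perm (Fin 5)) = 1 := congrArg Subtype.val h
    exact absurd this (by decide)
  have h3mem : Equiv.swap (0 : Fin 5) 1 * Equiv.swap 0 2 ∈ alternatingGroup (Fin 5) := by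
    rw [Equiv.Perm.mem_alternatingGroup, _root_.map_mul,
      Equiv.Perm.sign_swap (by decide), Equiv.Perm.sign_swap (by decide)]
    decide
  set g₃ : alternatingGroup (Fin 5) := ⟨Equiv.swap (0 : Fin 5) 1 * Equiv.swap 0 2, h3mem⟩ with hg₃
  have hg₃3 : g₃ ^ 3 = 1 := by
    ext : 1
    show (Equiv.swap (0 : Fin 5) 1 * Equiv.swap 0 2) ^ 3 = 1
    decide
  have hg₃ne : g₃ ≠ 1 := by
    intro h
    have : (Equiv.swap (0 : Fin 5) 1 * Equiv.swap 0 2) = 1 := congrArg Subtype.val h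
    exact absurd this (by decide)
  have hA5 : A g₅ ^ 5 = 1 := by
    have : ((ρ g₅) ^ 5 : Matrix.GeneralLinearGroup (Fin 4) (ZMod 2)) = 1 := by
      rw [← map_pow, hg₅5, _root_.map_one]
    calc A g₅ ^ 5 = (((ρ g₅) ^ 5 : Matrix.GeneralLinearGroup (Fin 4) (ZMod 2)) :
          Matrix (Fin 4) (Fin 4) (ZMod 2)) := (Units.val_pow_eq_pow_val _ _).symm
      _ = 1 := by rw [this]; rfl
  -- the subgroup fixing W pointwise
  set N₁ : Subgroup (alternatingGroup (Fin 5)) :=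
    { carrier := {g | ∀ w ∈ W, A g *ᵥ w = w}
      one_mem' := by intro w _; rw [hA1, one_mulVec]
      mul_mem' := by
        intro a b ha hb w hw
        rw [hAmul, ← mulVec_mulVec, hb w hw, ha w hw]
      inv_mem' := by
        intro g hg w hw
        have : A g⁻¹ *ᵥ (A g *ᵥ w) = w := hinv g w
        rwa [hg w hw] at this } with hN₁
  have hN₁mem : ∀ g, g ∈ N₁ ↔ ∀ w ∈ W, A g *ᵥ w = w := fun g => Iff.rfl
  have hN₁normal : N₁.Normal := by
    constructor
    intro n hn g w hw
    have h1 : A g⁻¹ *ᵥ w ∈ W := hW' g⁻¹ w hw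
    have h2 : A n *ᵥ (A g⁻¹ *ᵥ w) = A g⁻¹ *ᵥ w := hn _ h1
    rw [hAmul, hAmul, ← mulVec_mulVec, ← mulVec_mulVec, h2, hinv']
  -- quotient setup
  set mk : (Fin 4 → ZMod 2) → ((Fin 4 → ZMod 2) ⧸ W) := Submodule.Quotient.mk with hmk
  have hmkA : ∀ g x y, mk x = mk y → mk (A g *ᵥ x) = mk (A g *ᵥ y) := by
    intro g x y h
    rw [hmk, Submodule.Quotient.eq] at h ⊢
    rw [← mulVec_sub]
    exact hW' g _ h
  set N₂ : Subgroup (alternatingGroup (Fin 5)) :=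
    { carrier := {g | ∀ v, mk (A g *ᵥ v) = mk v}
      one_mem' := by intro v; rw [hA1, one_mulVec]
      mul_mem' := by
        intro a b ha hb v
        rw [hAmul, ← mulVec_mulVec]
        calc mk (A a *ᵥ (A b *ᵥ v)) = mk (A a *ᵥ v) := hmkA a _ _ (hb v)
          _ = mk v := ha v
      inv_mem' := by
        intro g hg v
        have := hg (A g⁻¹ *ᵥ v)
        rw [hinv'] at this
        exact this.symm } with hN₂
  have hN₂normal : N₂.Normal := by
    constructor
    intro n hn g v
    have h1 : mk (A n *ᵥ (A g⁻¹ *ᵥ v)) = mk (A g⁻¹ *ᵥ v) := hn _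
    have h2 := hmkA g _ _ h1
    rw [hinv'] at h2
    rw [hAmul, hAmul, ← mulVec_mulVec, ← mulVec_mulVec]
    exact h2
  -- finrank facts
  have hrkV : Module.finrank (ZMod 2) (Fin 4 → ZMod 2) = 4 := Module.finrank_fin_fun (ZMod 2)
  -- Step 1: N₁ = ⊤
  have hN₁top : N₁ = ⊤ := by
    rcases hN₁normal.eq_bot_or_eq_top with hbot | htop
    · exfalso
      have hg₅notin : g₅ ∉ N₁ := by
        rw [hbot, Subgroup.mem_bot]; exact hg₅ne
      rw [hN₁mem] at hg₅notin
      push_neg at hg₅notin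
      obtain ⟨w, hw, hwne⟩ := hg₅notin
      have hmaps : ∀ x ∈ W, (A g₅).mulVecLin x ∈ W := fun x hx => hW' g₅ x hx
      set e : Module.End (ZMod 2) W := ((A g₅).mulVecLin).restrict hmaps with he
      have hept : ∀ (n : ℕ) (x : W), (((e ^ n) x : W) : Fin 4 → ZMod 2) = A g₅ ^ n *ᵥ (x : Fin 4 → ZMod 2) := by
        intro n
        induction n with
        | zero => intro x; simp
        | succ n ih =>
          intro x
          rw [pow_succ', Module.End.mul_apply]
          have : ((e ((e ^ n) x) : W) : Fin 4 → ZMod 2) =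
              A g₅ *ᵥ (((e ^ n) x : W) : Fin 4 → ZMod 2) := rfl
          rw [this, ih, mulVec_mulVec, ← pow_succ']
      have he5 : e ^ 5 = 1 := by
        apply LinearMap.ext
        intro x
        apply Subtype.ext
        rw [hept 5 x, hA5, one_mulVec]
        rfl
      have hene : e ≠ 1 := by
        intro h
        apply hwne
        have := congrArg Subtype.val (LinearMap.congr_fun h ⟨w, hw⟩)
        simpa [hept] using (hept 1 ⟨w, hw⟩).symm.trans
          (by rw [h]; simp [pow_one])
      have hdim : Module.finrank (ZMod 2) W ≤ 3 := by
        have := Submodule.finrank_lt (K := ZMod 2) (V := Fin 4 → ZMod 2)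
          hWtop
        omega
      exact absurd (key_s12 e he5 hene hdim) not_false
    · exact htop
  have hfix : ∀ g, ∀ w ∈ W, A g *ᵥ w = w := by
    intro g
    have : g ∈ N₁ := hN₁top ▸ Subgroup.mem_top g
    exact this
  -- Step 2: N₂ = ⊤
  have hN₂top : N₂ = ⊤ := by
    rcases hN₂normal.eq_bot_or_eq_top with hbot | htop
    · exfalso
      have hg₅notin : g₅ ∉ N₂ := by
        rw [hbot, Subgroup.mem_bot]; exact hg₅ne
      have : ¬∀ v, mk (A g₅ *ᵥ v) = mk v := hg₅notin
      push_neg at this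
      obtain ⟨v, hvne⟩ := this
      have hle : W ≤ W.comap ((A g₅).mulVecLin) := fun x hx => hW' g₅ x hx
      set q : Module.End (ZMod 2) ((Fin 4 → ZMod 2) ⧸ W) :=
        Submodule.mapQ W W ((A g₅).mulVecLin) hle with hq
      have hqpt : ∀ (n : ℕ) (x : Fin 4 → ZMod 2), (q ^ n) (mk x) = mk (A g₅ ^ n *ᵥ x) := by
        intro n
        induction n with
        | zero => intro x; simp [hmk]
        | succ n ih =>
          intro x
          rw [pow_succ', Module.End.mul_apply, ih]
          rw [hmk, hq, Submodule.mapQ_apply]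
          have : (A g₅).mulVecLin (A g₅ ^ n *ᵥ x) = A g₅ ^ (n + 1) *ᵥ x := by
            rw [mulVecLin_apply, mulVec_mulVec, ← pow_succ']
          rw [this]
      have hq5 : q ^ 5 = 1 := by
        apply LinearMap.ext
        intro x
        obtain ⟨x, rfl⟩ := Submodule.Quotient.mk_surjective W x
        rw [show Submodule.Quotient.mk x = mk x from rfl, hqpt 5 x, hA5, one_mulVec]
        rfl
      have hqne : q ≠ 1 := by
        intro h
        apply hvne
        have := hqpt 1 v
        rw [h, pow_one] at this
        simpa [hmk] using this.symm
      haveI : Finite ((Fin 4 → ZMod 2) ⧸ W) :=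
        Finite.of_surjective _ (Submodule.Quotient.mk_surjective W)
      have hrkW : Module.finrank (ZMod 2) W ≠ 0 := by
        intro h0
        exact hWbot (Submodule.finrank_eq_zero.mp h0)
      have hdim : Module.finrank (ZMod 2) ((Fin 4 → ZMod 2) ⧸ W) ≤ 3 := by
        have := Submodule.finrank_quotient_add_finrank W
        rw [hrkV] at this
        omega
      exact absurd (key_s12 q hq5 hqne hdim) not_false
    · exact htop
  have hquo : ∀ g v, mk (A g *ᵥ v) = mk v := by
    intro g
    have : g ∈ N₂ := hN₂top ▸ Subgroup.mem_top g
    exact this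
  -- squares act trivially
  have hxx : ∀ x : Fin 4 → ZMod 2, x + x = 0 := by
    intro x; funext i
    have : ∀ a : ZMod 2, a + a = 0 := by decide
    exact this (x i)
  have hneg : ∀ x : Fin 4 → ZMod 2, -x = x := by
    intro x
    rw [neg_eq_iff_add_eq_zero]
    exact hxx x
  have hsq : ∀ g (v : Fin 4 → ZMod 2), A g *ᵥ (A g *ᵥ v) = v := by
    intro g v
    have h1 : A g *ᵥ v - v ∈ W := (Submodule.Quotient.eq W).mp (hquo g v)
    have h2 : A g *ᵥ (A g *ᵥ v - v) = A g *ᵥ v - v := hfix g _ h1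
    rw [mulVec_sub] at h2
    have h3 : A g *ᵥ (A g *ᵥ v) = (A g *ᵥ v - v) + (A g *ᵥ v) := sub_eq_iff_eq_add.mp h2
    rw [h3]
    calc (A g *ᵥ v - v) + (A g *ᵥ v) = (A g *ᵥ v + A g *ᵥ v) - v := by abel
      _ = 0 - v := by rw [hxx]
      _ = v := by rw [zero_sub, hneg]
  -- hence ρ g₃ = 1
  have h3fix : ∀ v : Fin 4 → ZMod 2, A g₃ *ᵥ v = v := by
    intro v
    have e1 : A g₃ *ᵥ (A g₃ *ᵥ (A g₃ *ᵥ v)) = A g₃ *ᵥ v := hsq g₃ (A g₃ *ᵥ v)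
    have e2 : A g₃ *ᵥ (A g₃ *ᵥ (A g₃ *ᵥ v)) = v := by
      rw [mulVec_mulVec, mulVec_mulVec, ← hAmul, ← hAmul]
      have hcube : g₃ * g₃ * g₃ = 1 := by
        have h := hg₃3
        rw [pow_succ, pow_succ, pow_one] at h
        exact h
      rw [hcube, hA1, one_mulVec]
    rw [e1] at e2
    exact e2
  have hA3 : A g₃ = 1 := by
    ext i j
    have h := congrFun (h3fix (Pi.single j 1)) i
    rw [mulVec_single_one] at h
    change A g₃ i j = _ at h
    rw [h]
    simp [Matrix.one_apply, Pi.single_apply, eq_comm]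
  have hρ3 : ρ g₃ = 1 := by
    apply Units.ext
    rw [Units.val_one]
    exact hA3
  rcases (MonoidHom.normal_ker ρ).eq_bot_or_eq_top with hbot | htop
  · have hmem : g₃ ∈ ρ.ker := MonoidHom.mem_ker.mpr hρ3
    rw [hbot, Subgroup.mem_bot] at hmem
    exact hg₃ne hmem
  · exact hρ (MonoidHom.ext fun g => by
      have hmem : g ∈ ρ.ker := htop ▸ Subgroup.mem_top g
      rw [MonoidHom.mem_ker] at hmem
      simpa using hmem)
end

section
/- Let B = Dic₁₂ × Dic₁₂ be the direct product of two copies of the dicyclic group of order 12, and let φ : C₂ → Aut(B) be the homomorphism sending the nonidentity element of the cyclic group C₂ of order 2 to the automorphism of B swapping the two factors. Then the semidirect product G = B ⋊_φ C₂ (of order 288) has Jordan constant equal to 8. -/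
open QuaternionGroup SemidirectProduct

abbrev Q3 := QuaternionGroup 3
abbrev C2 := Multiplicative (ZMod 2)

lemma Q3_card : Nat.card Q3 = 12 := by
  rw [Nat.card_eq_fintype_card, QuaternionGroup.card]

lemma Q3_not_comm : ¬ (∀ x y : Q3, x * y = y * x) := by decide

lemma c2cases (t : C2) : t = 1 ∨ t = Multiplicative.ofAdd 1 := by revert t; decide

lemma conj_a_one (g : Q3) : g * a 1 * g⁻¹ = a 1 ∨ g * a 1 * g⁻¹ = (a 1)⁻¹ := by
  revert g; decide

lemma abelian_Q3_card_le (S : Subgroup Q3) (hS : IsMulCommutative S) : Nat.card S ≤ 6 := by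
  haveI := hS
  have hdvd : Nat.card S ∣ 12 := Q3_card ▸ S.card_subgroup_dvd_card
  by_contra h
  push_neg at h
  have h12 : Nat.card S = 12 :=
    (Nat.eq_of_dvd_of_lt_two_mul (by norm_num) hdvd (by omega)).symm
  have htop : S = ⊤ := Subgroup.eq_top_of_card_eq S (h12.trans Q3_card.symm)
  subst htop
  exact Q3_not_comm fun x y =>
    Subgroup.mul_comm_of_mem_isMulCommutative (H := (⊤ : Subgroup Q3)) trivial trivial

lemma abelian_P_card_le (S : Subgroup (Q3 × Q3)) (hS : IsMulCommutative S) : Nat.card S ≤ 36 := by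
  haveI := hS
  set S1 := S.map (MonoidHom.fst Q3 Q3)
  set S2 := S.map (MonoidHom.snd Q3 Q3)
  have hle : S ≤ S1.prod S2 := by
    rintro ⟨x, y⟩ h
    exact ⟨⟨⟨x, y⟩, h, rfl⟩, ⟨⟨x, y⟩, h, rfl⟩⟩
  have h1 : Nat.card S ≤ Nat.card (S1.prod S2) := Subgroup.card_le_of_le hle
  have h2 : Nat.card (S1.prod S2) = Nat.card S1 * Nat.card S2 := by
    rw [Nat.card_congr (Subgroup.prodEquiv S1 S2).toEquiv, Nat.card_prod]
  have h3 := abelian_Q3_card_le S1 (Subgroup.map_isMulCommutative S _)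
  have h4 := abelian_Q3_card_le S2 (Subgroup.map_isMulCommutative S _)
  calc Nat.card S ≤ Nat.card S1 * Nat.card S2 := h2 ▸ h1
    _ ≤ 6 * 6 := Nat.mul_le_mul h3 h4
    _ = 36 := rfl

abbrev R : Subgroup Q3 := Subgroup.zpowers (a 1)

lemma R_normal : R.Normal := by
  constructor
  intro n hn g
  obtain ⟨k, rfl⟩ := Subgroup.mem_zpowers_iff.mp hn
  rw [← conj_zpow]
  rcases conj_a_one g with hc | hc <;> rw [hc]
  · exact Subgroup.zpow_mem _ (Subgroup.mem_zpowers _) k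
  · exact Subgroup.zpow_mem _ (Subgroup.inv_mem _ (Subgroup.mem_zpowers _)) k

lemma R_card : Nat.card R = 6 := by
  rw [Nat.card_zpowers, orderOf_a_one]

instance RR_comm : IsMulCommutative (R.prod R) := by
  constructor; constructor
  rintro ⟨⟨x1, x2⟩, hx⟩ ⟨⟨y1, y2⟩, hy⟩
  rw [Subgroup.mem_prod] at hx hy
  apply Subtype.ext
  apply Prod.ext
  · exact Subgroup.mul_comm_of_mem_isMulCommutative (H := R) hx.1 hy.1
  · exact Subgroup.mul_comm_of_mem_isMulCommutative (H := R) hx.2 hy.2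
section
variable (φ : C2 →* MulAut (Q3 × Q3))

def gequiv : (Q3 × Q3) ⋊[φ] C2 ≃ (Q3 × Q3) × C2 where
  toFun g := (g.left, g.right)
  invFun p := ⟨p.1, p.2⟩
  left_inv _ := rfl
  right_inv _ := rfl

lemma G_finite : Finite ((Q3 × Q3) ⋊[φ] C2) := Finite.of_equiv _ (gequiv φ).symm

lemma G_card : Nat.card ((Q3 × Q3) ⋊[φ] C2) = 288 := by
  rw [Nat.card_congr (gequiv φ), Nat.card_prod, Nat.card_prod, Q3_card]
  simp [Nat.card_eq_fintype_card]

/-- The big abelian normal subgroup. -/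
def A0 : Subgroup ((Q3 × Q3) ⋊[φ] C2) := (R.prod R).map inl

instance A0_comm : IsMulCommutative (A0 φ) := Subgroup.map_isMulCommutative _ _

lemma A0_card : Nat.card (A0 φ) = 36 := by
  rw [A0, ← Nat.card_congr (Subgroup.equivMapOfInjective _ inl inl_injective).toEquiv,
      Nat.card_congr (Subgroup.prodEquiv R R).toEquiv, Nat.card_prod, R_card]

lemma A0_normal (hφ : φ (Multiplicative.ofAdd 1) = MulEquiv.prodComm) : (A0 φ).Normal := by
  haveI := R_normal
  constructor
  rintro n hn g
  obtain ⟨b, hb, rfl⟩ := hn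
  have hconj : g * inl b * g⁻¹ = inl (g.left * φ g.right b * g.left⁻¹) := by
    apply SemidirectProduct.ext
    · simp [mul_assoc, MulAut.inv_def]
    · simp
  rw [hconj]
  refine ⟨_, ?_, rfl⟩
  have hb' : b ∈ R.prod R := hb
  rw [Subgroup.mem_prod] at hb'
  have hmem : φ g.right b ∈ R.prod R := by
    rcases c2cases g.right with ht | ht <;> rw [ht]
    · simpa [Subgroup.mem_prod] using hb'
    · rw [hφ]
      simpa [Subgroup.mem_prod, MulEquiv.coe_prodComm] using ⟨hb'.2, hb'.1⟩
  exact (Subgroup.prod_normal R R).conj_mem _ hmem _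

lemma A0_index : (A0 φ).index = 8 := by
  have h1 := (A0 φ).card_mul_index
  rw [A0_card, G_card] at h1
  omega

end

section
variable (φ : C2 →* MulAut (Q3 × Q3))

lemma abelian_G_card_le (hφ : φ (Multiplicative.ofAdd 1) = MulEquiv.prodComm)
    (A : Subgroup ((Q3 × Q3) ⋊[φ] C2)) (hA : IsMulCommutative A) : Nat.card A ≤ 36 := by
  haveI := hA
  by_cases hcase : ∀ g : (Q3 × Q3) ⋊[φ] C2, g ∈ A → g.right = 1
  · have hmem : ∀ g : (Q3 × Q3) ⋊[φ] C2, g ∈ A → inl g.left = g := fun g hg =>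
      SemidirectProduct.ext rfl (hcase g hg).symm
    set S : Subgroup (Q3 × Q3) := A.comap inl with hS
    have hSc : IsMulCommutative S := by
      constructor; constructor
      intro x y
      have h1 : (inl x.1 : (Q3 × Q3) ⋊[φ] C2) ∈ A := x.2
      have h2 : (inl y.1 : (Q3 × Q3) ⋊[φ] C2) ∈ A := y.2
      have hcm := Subgroup.mul_comm_of_mem_isMulCommutative (H := A) h1 h2
      rw [← map_mul, ← map_mul] at hcm
      exact Subtype.ext (inl_injective hcm)
    have hAS : A = S.map inl := by
      ext g
      constructor
      · intro hg
        exact ⟨g.left, by simpa [hS, hmem g hg] using hg, hmem g hg⟩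
      · rintro ⟨b, hb, rfl⟩
        exact hb
    rw [hAS, ← Nat.card_congr (Subgroup.equivMapOfInjective S inl inl_injective).toEquiv]
    exact abelian_P_card_le S hSc
  · push_neg at hcase
    obtain ⟨g, hgA, hgr⟩ := hcase
    have hgr' : g.right = Multiplicative.ofAdd 1 := (c2cases g.right).resolve_left hgr
    have key : ∀ h : (Q3 × Q3) ⋊[φ] C2, h ∈ A →
        h.left.1 = if h.right = 1 then g.left.1 * h.left.2 * g.left.1⁻¹
          else g.left.1 * h.left.2 * g.left.2⁻¹ := by
      intro h hh
      have hc : g * h = h * g := Subgroup.mul_comm_of_mem_isMulCommutative (H := A) hgA hh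
      have hl : (g * h).left = (h * g).left := by rw [hc]
      rw [mul_left, mul_left, hgr', hφ] at hl
      have hl1 := congrArg Prod.fst hl
      rcases c2cases h.right with ht | ht
      · rw [ht, map_one] at hl1
        simp only [MulEquiv.coe_prodComm, Prod.fst_mul, Prod.fst_swap,
          MulAut.one_apply] at hl1
        rw [if_pos ht]
        rw [eq_mul_inv_of_mul_eq hl1.symm]
      · rw [ht, hφ] at hl1
        simp only [MulEquiv.coe_prodComm, Prod.fst_mul, Prod.fst_swap] at hl1
        rw [if_neg (by rw [ht]; decide)]
        rw [eq_mul_inv_of_mul_eq hl1.symm]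
    have inj : Function.Injective
        (fun h : A => (((h : (Q3 × Q3) ⋊[φ] C2)).left.2, ((h : (Q3 × Q3) ⋊[φ] C2)).right)) := by
      rintro ⟨h1, hh1⟩ ⟨h2, hh2⟩ heq
      simp only [Prod.mk.injEq] at heq
      obtain ⟨hv, htq⟩ := heq
      have k1 := key h1 hh1
      have k2 := key h2 hh2
      apply Subtype.ext
      apply SemidirectProduct.ext ?_ htq
      apply Prod.ext ?_ hv
      rw [k1, k2, hv, htq]
    have hle := Nat.card_le_card_of_injective _ inj
    have hq : Nat.card (Q3 × C2) = 24 := by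
      rw [Nat.card_prod, Q3_card]
      simp [Nat.card_eq_fintype_card]
    omega

end


/-- Let `B = Dic₁₂ × Dic₁₂` and let `φ : C₂ → Aut B` send the nonidentity element to the
swap of the two factors. Then the semidirect product `B ⋊[φ] C₂` (of order `288`) has
Jordan constant `8`. -/
theorem stmt_16
    (φ : Multiplicative (ZMod 2) →* MulAut (QuaternionGroup 3 × QuaternionGroup 3))
    (hφ : φ (Multiplicative.ofAdd 1) = MulEquiv.prodComm) :
    jordanConstant
      ((QuaternionGroup 3 × QuaternionGroup 3) ⋊[φ] Multiplicative (ZMod 2)) = 8 := by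
  haveI := G_finite φ
  haveI := A0_normal φ hφ
  have h8 : 8 ∈ {d : ℕ | 0 < d ∧ ∀ H : Subgroup ((Q3 × Q3) ⋊[φ] C2), Finite H →
      ∃ A : Subgroup H, A.Normal ∧ IsMulCommutative A ∧ A.index ≤ 8} := by
    refine ⟨by norm_num, fun H _ =>
      ⟨(A0 φ).subgroupOf H, (A0_normal φ hφ).subgroupOf H, inferInstance, ?_⟩⟩
    have hdvd : ((A0 φ).subgroupOf H).index ∣ (A0 φ).index :=
      Subgroup.relIndex_dvd_index_of_normal (A0 φ) H
    rw [A0_index φ] at hdvd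
    exact Nat.le_of_dvd (by norm_num) hdvd
  unfold jordanConstant
  refine le_antisymm (Nat.sInf_le h8) (le_csInf ⟨8, h8⟩ ?_)
  rintro d ⟨hd0, hd⟩
  by_contra hlt
  push_neg at hlt
  obtain ⟨A, hN, hC, hI⟩ := hd ⊤ inferInstance
  haveI := hC
  have hmul : Nat.card A * A.index = Nat.card (⊤ : Subgroup ((Q3 × Q3) ⋊[φ] C2)) :=
    A.card_mul_index
  rw [Subgroup.card_top, G_card φ] at hmul
  set A' := A.map (Subgroup.subtype ⊤) with hA'
  have hcc : IsMulCommutative A' := Subgroup.map_isMulCommutative _ _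
  have hcard : Nat.card A' = Nat.card A :=
    (Nat.card_congr (Subgroup.equivMapOfInjective A _ (Subgroup.subtype_injective _)).toEquiv).symm
  have h36 : Nat.card A ≤ 36 := hcard ▸ abelian_G_card_le φ hφ A' hcc
  have h7 : A.index ≤ 7 := le_trans hI (by omega)
  have hh : Nat.card A * A.index ≤ 36 * 7 := Nat.mul_le_mul h36 h7
  omega
end

section
/- The special linear group SL(2, F₅) over the field with five elements (isomorphic to the binary icosahedral group) has Jordan constant equal to 60; equivalently, the only abelian normal subgroups of SL(2, F₅) are the trivial subgroup and its center of order 2. -/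
section SL25

set_option maxRecDepth 40000
set_option maxHeartbeats 1000000

private abbrev G5 := Matrix.SpecialLinearGroup (Fin 2) (ZMod 5)

private instance : DecidableEq G5 :=
  fun x y => decidable_of_iff (x.1 = y.1) Subtype.ext_iff.symm

private def sl5m : G5 := ⟨!![(4 : ZMod 5), 0; 0, 4], by decide⟩
private def sl5a : G5 := ⟨!![(0 : ZMod 5), 1; 4, 0], by decide⟩
private def sl5b : G5 := ⟨!![(0 : ZMod 5), 1; 4, 1], by decide⟩
private def sl5w1 : G5 := ⟨!![(1 : ZMod 5), 1; 0, 1], by decide⟩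
private def sl5w2 : G5 := ⟨!![(1 : ZMod 5), 0; 1, 1], by decide⟩

private theorem sl5_center_sub :
    ∀ g : G5, g * sl5w1 = sl5w1 * g → g * sl5w2 = sl5w2 * g → g = 1 ∨ g = sl5m := by decide

private theorem sl5_m_central : ∀ h : G5, sl5m * h = h * sl5m := by decide

private theorem sl5_key : ∀ g : G5, g = 1 ∨ g = sl5m ∨
    ¬(g * (sl5a * g * sl5a⁻¹) = (sl5a * g * sl5a⁻¹) * g) ∨
    ¬(g * (sl5b * g * sl5b⁻¹) = (sl5b * g * sl5b⁻¹) * g) ∨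
    ¬((sl5a * g * sl5a⁻¹) * (sl5b * g * sl5b⁻¹)
        = (sl5b * g * sl5b⁻¹) * (sl5a * g * sl5a⁻¹)) := by decide

private theorem sl5_m_ne_one : sl5m ≠ 1 := by decide

private theorem sl5_card : Fintype.card G5 = 120 := by decide

private theorem sl5_natCard : Nat.card G5 = 120 := by
  rw [Nat.card_eq_fintype_card]; exact sl5_card

private theorem sl5_mem_center_iff (g : G5) :
    g ∈ Subgroup.center G5 ↔ g = 1 ∨ g = sl5m := by
  constructor
  · intro hg
    rw [Subgroup.mem_center_iff] at hg
    exact sl5_center_sub g (hg sl5w1).symm (hg sl5w2).symm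
  · rintro (rfl | rfl)
    · exact Subgroup.one_mem _
    · exact Subgroup.mem_center_iff.mpr fun h => (sl5_m_central h).symm

private theorem sl5_card_center : Nat.card (Subgroup.center G5) = 2 := by
  have hset : (Subgroup.center G5 : Set G5) = {1, sl5m} := by
    ext g; simpa using sl5_mem_center_iff g
  have := Nat.card_coe_set_eq (Subgroup.center G5 : Set G5)
  rw [hset] at this
  rw [show Nat.card (Subgroup.center G5) = Nat.card ({1, sl5m} : Set G5) from by rw [← hset]; rfl]
  rw [Nat.card_coe_set_eq, Set.ncard_pair (Ne.symm sl5_m_ne_one)]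

/-- Every abelian normal subgroup of `SL(2,5)` is contained in the center. -/
private theorem sl5_le_center (A : Subgroup G5) (hN : A.Normal) (hC : IsMulCommutative A) :
    A ≤ Subgroup.center G5 := by
  haveI := hC
  intro g hg
  have hga : sl5a * g * sl5a⁻¹ ∈ A := hN.conj_mem g hg sl5a
  have hgb : sl5b * g * sl5b⁻¹ ∈ A := hN.conj_mem g hg sl5b
  rcases sl5_key g with h | h | h | h | h
  · exact (sl5_mem_center_iff g).mpr (Or.inl h)
  · exact (sl5_mem_center_iff g).mpr (Or.inr h)
  · exact absurd (Subgroup.mul_comm_of_mem_isMulCommutative A hg hga) h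
  · exact absurd (Subgroup.mul_comm_of_mem_isMulCommutative A hg hgb) h
  · exact absurd (Subgroup.mul_comm_of_mem_isMulCommutative A hga hgb) h

private theorem sl5_classify (A : Subgroup G5) (hN : A.Normal) (hC : IsMulCommutative A) :
    A = ⊥ ∨ A = Subgroup.center G5 := by
  have hle : A ≤ Subgroup.center G5 := sl5_le_center A hN hC
  have hdvd : Nat.card A ∣ 2 := by
    have := Subgroup.card_dvd_of_le hle; rwa [sl5_card_center] at this
  rcases (Nat.dvd_prime Nat.prime_two).mp hdvd with h1 | h2
  · exact Or.inl (Subgroup.card_eq_one.mp h1)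
  · refine Or.inr (Subgroup.eq_of_le_of_card_ge hle ?_)
    rw [sl5_card_center, h2]

private theorem sl5_upper : ∀ H : Subgroup G5, Finite H →
    ∃ A : Subgroup H, A.Normal ∧ IsMulCommutative A ∧ A.index ≤ 60 := by
  intro H _
  refine ⟨(Subgroup.center G5).subgroupOf H,
    Subgroup.Normal.subgroupOf inferInstance H, inferInstance, ?_⟩
  set A := (Subgroup.center G5).subgroupOf H with hA
  have hmul : A.index * Nat.card A = Nat.card H := Subgroup.index_mul_card A
  have hHdvd : Nat.card H ∣ 120 := sl5_natCard ▸ Subgroup.card_subgroup_dvd_card H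
  by_cases hm : sl5m ∈ H
  · -- -1 ∈ H, so A contains a nontrivial element, card A ≥ 2
    have hmA : (⟨sl5m, hm⟩ : H) ∈ A :=
      Subgroup.mem_subgroupOf.mpr ((sl5_mem_center_iff sl5m).mpr (Or.inr rfl))
    have hAne : A ≠ ⊥ := by
      intro hbot
      rw [hbot, Subgroup.mem_bot] at hmA
      exact sl5_m_ne_one (congrArg Subtype.val hmA)
    have h2 : 2 ≤ Nat.card A := (Subgroup.one_lt_card_iff_ne_bot A).mpr hAne
    have hH120 : Nat.card H ≤ 120 := Nat.le_of_dvd (by norm_num) hHdvd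
    have : A.index * 2 ≤ 120 := by
      calc A.index * 2 ≤ A.index * Nat.card A := Nat.mul_le_mul_left _ h2
        _ = Nat.card H := hmul
        _ ≤ 120 := hH120
    omega
  · -- -1 ∉ H, so H ≠ ⊤ hence card H ≤ 60
    have hne : Nat.card H ≠ 120 := by
      intro h120
      have : H = ⊤ := Subgroup.eq_top_of_card_eq H (by rw [h120, sl5_natCard])
      exact hm (this ▸ Subgroup.mem_top sl5m)
    have hle60 : Nat.card H ≤ 60 := by
      obtain ⟨k, hk⟩ := hHdvd
      rcases Nat.lt_or_ge k 2 with hk2 | hk2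
      · interval_cases k <;> omega
      · have : Nat.card H * 2 ≤ Nat.card H * k := Nat.mul_le_mul_left _ hk2
        omega
    have hidx : A.index ∣ Nat.card H := Subgroup.index_dvd_card A
    have hpos : 0 < Nat.card H := Nat.card_pos
    exact le_trans (Nat.le_of_dvd hpos hidx) hle60

private theorem sl5_lower : ∀ d : ℕ,
    (0 < d ∧ ∀ H : Subgroup G5, Finite H →
      ∃ A : Subgroup H, A.Normal ∧ IsMulCommutative A ∧ A.index ≤ d) → 60 ≤ d := by
  rintro d ⟨-, hd⟩
  obtain ⟨A, hN, hC, hidx⟩ := hd ⊤ inferInstance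
  haveI := hC
  set f := (⊤ : Subgroup G5).subtype with hf
  have hsurj : Function.Surjective f := fun g => ⟨⟨g, trivial⟩, rfl⟩
  have hinj : Function.Injective f := Subtype.coe_injective
  set A' := A.map f with hA'
  have hN' : A'.Normal := hN.map f hsurj
  have hC' : IsMulCommutative A' := inferInstance
  have hle : A' ≤ Subgroup.center G5 := sl5_le_center A' hN' hC'
  have hdvd : Nat.card A' ∣ 2 := by
    have := Subgroup.card_dvd_of_le hle; rwa [sl5_card_center] at this
  have hcardeq : Nat.card A = Nat.card A' :=
    Nat.card_congr (A.equivMapOfInjective f hinj).toEquiv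
  have h2 : Nat.card A ≤ 2 := hcardeq ▸ Nat.le_of_dvd (by norm_num) hdvd
  have hmul : A.index * Nat.card A = Nat.card (⊤ : Subgroup G5) := Subgroup.index_mul_card A
  rw [Subgroup.card_top, sl5_natCard] at hmul
  have : 120 ≤ A.index * 2 := by
    calc (120 : ℕ) = A.index * Nat.card A := hmul.symm
      _ ≤ A.index * 2 := Nat.mul_le_mul_left _ h2
  omega

end SL25

/-- `SL(2, F₅)` has Jordan constant `60`; equivalently, the only abelian normal subgroups
of `SL(2, F₅)` are the trivial subgroup and the center, which has order `2`. -/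
theorem stmt_17 :
    jordanConstant (Matrix.SpecialLinearGroup (Fin 2) (ZMod 5)) = 60 ∧
    (∀ A : Subgroup (Matrix.SpecialLinearGroup (Fin 2) (ZMod 5)), A.Normal → IsMulCommutative A →
      A = ⊥ ∨ A = Subgroup.center (Matrix.SpecialLinearGroup (Fin 2) (ZMod 5))) ∧
    Nat.card (Subgroup.center (Matrix.SpecialLinearGroup (Fin 2) (ZMod 5))) = 2 := by
  refine ⟨?_, sl5_classify, sl5_card_center⟩
  have hmem : (60 : ℕ) ∈ {d : ℕ | 0 < d ∧ ∀ H : Subgroup G5, Finite H →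
      ∃ A : Subgroup H, A.Normal ∧ IsMulCommutative A ∧ A.index ≤ d} :=
    ⟨by norm_num, sl5_upper⟩
  exact le_antisymm (Nat.sInf_le hmem) (le_csInf ⟨60, hmem⟩ sl5_lower)
end
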